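/- arXiv:2502.19069 — 12 statements merged into one kernel-verified Lean document; each statement's English description precedes it below -/
import Mathlib

section
/- For every natural number n there exist polynomials φ and ψ with integer coefficients, each of degree n, such that for every real x one has exp(x)·φ(x) − ψ(x) = Σ_{k=0}^{∞} ((n+k)!/(k!·(2n+1+k)!))·x^{2n+1+k}, and for every real x ≠ 0 the n-th derivative of the function t ↦ (exp(t) − Σ_{j=0}^{n} t^j/j!)/t^{n+1} at x equals (exp(x)·φ(x) − ψ(x))/x^{2n+1}. -/
section HermitePadeAux
open Finset Nat


-- ===== key combinatorial identity (already verified) =====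
lemma hp_prod_fac (c : ℕ) : ∀ N : ℕ,
    (c ! : ℤ) * ∏ j ∈ range N, ((c : ℤ) + 1 + j) = ((c + N)! : ℤ)
  | 0 => by simp
  | N + 1 => by
    rw [prod_range_succ, ← mul_assoc, hp_prod_fac c N]
    push_cast [show c + (N + 1) = (c + N) + 1 from rfl, Nat.factorial_succ]
    ring

lemma hp_desc_int (m i : ℕ) :
    ((m : ℤ) - i) * m.descFactorial i = m.descFactorial (i + 1) := by
  rcases le_or_gt i m with h | h
  · rw [Nat.descFactorial_succ]
    push_cast [Nat.cast_sub h]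
    ring
  · rw [Nat.descFactorial_of_lt h, Nat.descFactorial_of_lt (by omega)]
    simp

lemma hp_key : ∀ n c m : ℕ,
    ∑ i ∈ range (n + 1), (-1 : ℤ) ^ (n - i) * (n.choose i) * ((c + n - i)!) *
        (m.descFactorial i)
      = (c ! : ℤ) * ∏ j ∈ range n, ((m : ℤ) - c - 1 - j)
  | 0, c, m => by simp
  | n + 1, c, m => by
    induction m with
    | zero =>
      have h0 : ∀ i ∈ range (n + 2), i ≠ 0 →
          (-1 : ℤ) ^ (n + 1 - i) * ((n+1).choose i) * ((c + (n+1) - i)!) *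
            ((0:ℕ).descFactorial i) = 0 := by
        intro i _ hi
        obtain ⟨j, rfl⟩ := Nat.exists_eq_succ_of_ne_zero hi
        simp [Nat.zero_descFactorial_succ]
      rw [Finset.sum_eq_single_of_mem 0 (by simp) h0]
      have h1 : ∏ j ∈ range (n+1), (((0:ℕ):ℤ) - c - 1 - j)
          = ∏ j ∈ range (n+1), ((-1) * ((c:ℤ) + 1 + j)) :=
        Finset.prod_congr rfl fun j _ => by push_cast; ring
      rw [h1, Finset.prod_mul_distrib, Finset.prod_const, Finset.card_range]
      have h2 := hp_prod_fac c (n + 1)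
      simp only [Nat.sub_zero, Nat.choose_zero_right, Nat.cast_one, mul_one,
        Nat.descFactorial_zero]
      rw [← h2]
      ring
    | succ m ih =>
      have hn := hp_key n c m
      have e1 : ∑ i ∈ range (n + 1),
            ((-1 : ℤ) ^ (n + 1 - (i + 1)) * ((n + 1).choose (i + 1)) *
              ((c + (n + 1) - (i + 1))!) * ((m + 1).descFactorial (i + 1)))
          = ∑ i ∈ range (n + 1),
            ((-1 : ℤ) ^ (n + 1 - (i + 1)) * ((n + 1).choose (i + 1)) *
                ((c + (n + 1) - (i + 1))!) * (m.descFactorial (i + 1))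
              + ((n : ℤ) + 1) * ((-1 : ℤ) ^ (n - i) * (n.choose i) * ((c + n - i)!) *
                (m.descFactorial i))) := by
        refine Finset.sum_congr rfl fun i hi => ?_
        have hi' : i ≤ n := by simpa [Nat.lt_succ_iff] using hi
        rw [show n + 1 - (i + 1) = n - i from by omega,
          show c + (n + 1) - (i + 1) = c + n - i from by omega,
          Nat.succ_descFactorial_succ]
        have hd := hp_desc_int m i
        have hc : (((n + 1).choose (i + 1) : ℤ)) * (i + 1) = (n + 1) * (n.choose i) := by
          exact_mod_cast congrArg (Nat.cast : ℕ → ℤ) (Nat.add_one_mul_choose_eq n i).symm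
        push_cast
        linear_combination ((-1 : ℤ) ^ (n - i) * ((c + n - i)! : ℤ) *
            ((n + 1).choose (i + 1) : ℤ)) * hd
          + ((-1 : ℤ) ^ (n - i) * ((c + n - i)! : ℤ) * (m.descFactorial i : ℤ)) * hc
      rw [Finset.sum_range_succ', e1, Finset.sum_add_distrib, ← Finset.mul_sum, hn]
      rw [Finset.sum_range_succ'] at ih
      have p1 : ∏ j ∈ range (n + 1), (((m + 1 : ℕ) : ℤ) - c - 1 - j)
          = (∏ j ∈ range n, ((m : ℤ) - c - 1 - j)) * ((m : ℤ) - c) := by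
        rw [Finset.prod_range_succ']
        congr 1
        · exact Finset.prod_congr rfl fun j _ => by push_cast; ring
        · push_cast; ring
      have p2 : ∏ j ∈ range (n + 1), ((m : ℤ) - c - 1 - j)
          = (∏ j ∈ range n, ((m : ℤ) - c - 1 - j)) * ((m : ℤ) - c - 1 - n) :=
        Finset.prod_range_succ _ _
      rw [p2] at ih
      rw [p1]
      simp only [Nat.descFactorial_zero, Nat.cast_one, mul_one] at ih ⊢
      linear_combination ih

-- ===== the integer coefficients =====
def hpA (n i : ℕ) : ℤ := (-1) ^ (n - i) * ((n + n - i).choose n) * (n.descFactorial (n - i))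

lemma hpA_mul {n i : ℕ} (h : i ≤ n) :
    (hpA n i) * (i ! : ℤ) * ((n - i)! : ℤ) = (-1) ^ (n - i) * ((n + n - i)! : ℤ) := by
  have h1 : (n - (n - i))! * n.descFactorial (n - i) = n ! :=
    Nat.factorial_mul_descFactorial (Nat.sub_le n i)
  rw [show n - (n - i) = i from by omega] at h1
  have h2 : (n + n - i).choose n * n ! * (n + n - i - n)! = (n + n - i)! :=
    Nat.choose_mul_factorial_mul_factorial (by omega)
  rw [show n + n - i - n = n - i from by omega] at h2
  have h1' : ((i ! : ℤ)) * (n.descFactorial (n - i)) = (n ! : ℤ) := by exact_mod_cast h1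
  have h2' : (((n + n - i).choose n : ℤ)) * (n ! : ℤ) * ((n - i)! : ℤ) = ((n + n - i)! : ℤ) := by
    exact_mod_cast h2
  unfold hpA
  linear_combination ((-1 : ℤ) ^ (n - i) * ((n + n - i).choose n : ℤ) * ((n - i)! : ℤ)) * h1'
    + ((-1 : ℤ) ^ (n - i)) * h2'

-- ===== real coefficient of x^m in exp x * φ x =====
noncomputable def hpC (n m : ℕ) : ℝ := (∏ j ∈ range n, ((m : ℝ) - n - 1 - j)) / m !

lemma hp_coeff (n m : ℕ) :
    ∑ i ∈ range (n + 1), (if i ≤ m then (hpA n i : ℝ) / ((m - i)! : ℝ) else 0)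
      = hpC n m := by
  have key := hp_key n n m
  have keyR : ∑ i ∈ range (n + 1),
      ((-1 : ℝ) ^ (n - i) * (n.choose i) * ((n + n - i)! : ℝ) * (m.descFactorial i))
      = (n ! : ℝ) * ∏ j ∈ range n, ((m : ℝ) - n - 1 - j) := by
    have := congrArg (fun z : ℤ => (z : ℝ)) key
    push_cast at this
    convert this using 2
  have hfac : (m ! : ℝ) ≠ 0 := Nat.cast_ne_zero.2 (Nat.factorial_ne_zero m)
  have hfacn : (n ! : ℝ) ≠ 0 := Nat.cast_ne_zero.2 (Nat.factorial_ne_zero n)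
  have step : ∀ i ∈ range (n + 1),
      (if i ≤ m then (hpA n i : ℝ) / ((m - i)! : ℝ) else 0)
        = ((-1 : ℝ) ^ (n - i) * (n.choose i) * ((n + n - i)! : ℝ) * (m.descFactorial i))
            / ((n ! : ℝ) * (m ! : ℝ)) := by
    intro i hi
    have hi' : i ≤ n := by simpa [Nat.lt_succ_iff] using hi
    by_cases h : i ≤ m
    · rw [if_pos h]
      have F1 : ((m - i)! : ℝ) * (m.descFactorial i : ℝ) = (m ! : ℝ) := by
        exact_mod_cast congrArg (Nat.cast : ℕ → ℝ) (Nat.factorial_mul_descFactorial h)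
      have F2 : ((n.choose i : ℝ)) * (i ! : ℝ) * ((n - i)! : ℝ) = (n ! : ℝ) := by
        exact_mod_cast congrArg (Nat.cast : ℕ → ℝ)
          (Nat.choose_mul_factorial_mul_factorial hi')
      have F3 : (hpA n i : ℝ) * (i ! : ℝ) * ((n - i)! : ℝ)
          = (-1) ^ (n - i) * ((n + n - i)! : ℝ) := by
        exact_mod_cast congrArg (fun z : ℤ => (z : ℝ)) (hpA_mul hi')
      have hmi : ((m - i)! : ℝ) ≠ 0 := Nat.cast_ne_zero.2 (Nat.factorial_ne_zero _)
      rw [div_eq_div_iff hmi (by positivity)]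
      rw [← F1, ← F2]
      linear_combination ((n.choose i : ℝ) * ((m - i)! : ℝ) * (m.descFactorial i : ℝ)) * F3
    · rw [if_neg h]
      rw [Nat.descFactorial_of_lt (by omega)]
      simp
  rw [Finset.sum_congr rfl step, ← Finset.sum_div, keyR, hpC]
  field_simp


lemma hpA_self (n : ℕ) : hpA n n = 1 := by
  simp [hpA]

-- exp as tsum
lemma hp_exp (x : ℝ) : Real.exp x = ∑' m : ℕ, x ^ m / m ! := by
  rw [Real.exp_eq_exp_ℝ, NormedSpace.exp_eq_tsum_div]

noncomputable def hpE (n : ℕ) (x : ℝ) (i m : ℕ) : ℝ :=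
  if i ≤ m then (hpA n i : ℝ) * x ^ m / ((m - i)! : ℝ) else 0

lemma hpE_shift (n : ℕ) (x : ℝ) (i : ℕ) :
    (fun m => hpE n x i (m + i)) = fun m => ((hpA n i : ℝ) * x ^ i) * (x ^ m / m !) := by
  funext m
  rw [hpE, if_pos (Nat.le_add_left i m), Nat.add_sub_cancel, pow_add]
  ring

lemma hpE_summable (n : ℕ) (x : ℝ) (i : ℕ) : Summable (hpE n x i) := by
  rw [← summable_nat_add_iff i, hpE_shift]
  exact (Real.summable_pow_div_factorial x).mul_left _

lemma hpE_tsum (n : ℕ) (x : ℝ) (i : ℕ) :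
    ∑' m, hpE n x i m = (hpA n i : ℝ) * x ^ i * Real.exp x := by
  rw [← Summable.sum_add_tsum_nat_add i (hpE_summable n x i)]
  have h1 : ∑ m ∈ range i, hpE n x i m = 0 := by
    refine Finset.sum_eq_zero fun m hm => ?_
    rw [hpE, if_neg (by simpa using hm)]
  have h2 : ∑' m : ℕ, hpE n x i (m + i) = (hpA n i : ℝ) * x ^ i * Real.exp x := by
    rw [show (fun m : ℕ => hpE n x i (m + i)) = fun m => ((hpA n i : ℝ) * x ^ i) * (x ^ m / m !)
      from hpE_shift n x i, tsum_mul_left, ← hp_exp]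
  rw [h1, h2, zero_add]

lemma hpE_sum_eq (n : ℕ) (x : ℝ) (m : ℕ) :
    ∑ i ∈ range (n + 1), hpE n x i m = hpC n m * x ^ m := by
  have : ∀ i ∈ range (n + 1),
      hpE n x i m = (if i ≤ m then (hpA n i : ℝ) / ((m - i)! : ℝ) else 0) * x ^ m := by
    intro i _
    rw [hpE]
    split <;> ring
  rw [Finset.sum_congr rfl this, ← Finset.sum_mul, hp_coeff]

lemma hpC_summable (n : ℕ) (x : ℝ) : Summable (fun m => hpC n m * x ^ m) := by
  have : (fun m => hpC n m * x ^ m) = fun m => ∑ i ∈ range (n + 1), hpE n x i m :=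
    funext fun m => (hpE_sum_eq n x m).symm
  rw [this]
  exact summable_sum fun i _ => hpE_summable n x i

lemma hp_core (n : ℕ) (x : ℝ) :
    Real.exp x * (∑ i ∈ range (n + 1), (hpA n i : ℝ) * x ^ i) = ∑' m, hpC n m * x ^ m := by
  have c1 : Real.exp x * (∑ i ∈ range (n + 1), (hpA n i : ℝ) * x ^ i)
      = ∑ i ∈ range (n + 1), ∑' m, hpE n x i m := by
    rw [Finset.mul_sum]
    refine Finset.sum_congr rfl fun i _ => ?_
    rw [hpE_tsum]; ring
  rw [c1, ← Summable.tsum_finsetSum (fun i _ => hpE_summable n x i)]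
  exact tsum_congr fun m => hpE_sum_eq n x m

lemma hp_head_zero (n m : ℕ) (h1 : n < m) (h2 : m < 2 * n + 1) : hpC n m = 0 := by
  have hc : ((m - n - 1 : ℕ) : ℝ) = (m : ℝ) - n - 1 := by
    rw [show m - n - 1 = m - (n + 1) from by omega, Nat.cast_sub (show n + 1 ≤ m by omega)]
    push_cast
    ring
  rw [hpC, Finset.prod_eq_zero (Finset.mem_range.2 (show m - n - 1 < n by omega))
    (by rw [hc]; ring), zero_div]

lemma hp_head_eq (n m : ℕ) (h : m ≤ n) :
    hpC n m = (((-1 : ℤ) ^ m * hpA n m : ℤ) : ℝ) := by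
  have hprod : ∏ j ∈ range n, ((m : ℝ) - n - 1 - j)
      = (-1) ^ n * (((n + n - m).descFactorial n : ℕ) : ℝ) := by
    rw [← Finset.prod_range_reflect (fun j => ((m : ℝ) - n - 1 - j)) n]
    have e : ∀ j ∈ range n, ((m : ℝ) - n - 1 - ((n - 1 - j : ℕ) : ℝ))
        = (-1) * (((n + n - m - j : ℕ) : ℝ)) := by
      intro j hj
      have hj' : j < n := Finset.mem_range.1 hj
      rw [Nat.cast_sub (show j ≤ n + n - m by omega),
        Nat.cast_sub (show m ≤ n + n by omega),
        show ((n - 1 - j : ℕ) : ℝ) = ((n - (1 + j) : ℕ) : ℝ) from by rw [Nat.sub_sub],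
        Nat.cast_sub (show 1 + j ≤ n by omega)]
      push_cast
      ring
    rw [Finset.prod_congr rfl e, Finset.prod_mul_distrib, Finset.prod_const, Finset.card_range,
      ← Nat.cast_prod, ← Nat.descFactorial_eq_prod_range]
  have hdesc : ((n + n - m).descFactorial n) * ((n - m)!) = (n + n - m)! := by
    have h2 := Nat.factorial_mul_descFactorial (show n ≤ n + n - m by omega)
    rw [show n + n - m - n = n - m from by omega] at h2
    rw [mul_comm]
    exact h2
  have hascR : (((n + n - m).descFactorial n : ℕ) : ℝ) * (((n - m)! : ℕ) : ℝ)
      = (((n + n - m)! : ℕ) : ℝ) := by exact_mod_cast congrArg (Nat.cast : ℕ → ℝ) hdesc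
  have F3 : (hpA n m : ℝ) * (m ! : ℝ) * ((n - m)! : ℝ)
      = (-1) ^ (n - m) * (((n + n - m)! : ℕ) : ℝ) := by
    exact_mod_cast congrArg (fun z : ℤ => (z : ℝ)) (hpA_mul h)
  have hsgn : (-1 : ℝ) ^ m * (-1 : ℝ) ^ (n - m) = (-1) ^ n := by
    rw [← pow_add, show m + (n - m) = n from by omega]
  have hfac : (m ! : ℝ) ≠ 0 := Nat.cast_ne_zero.2 (Nat.factorial_ne_zero m)
  have hfac2 : ((n - m)! : ℝ) ≠ 0 := Nat.cast_ne_zero.2 (Nat.factorial_ne_zero _)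
  rw [hpC, hprod, div_eq_iff hfac]
  push_cast
  apply mul_right_cancel₀ hfac2
  linear_combination ((-1 : ℝ) ^ n) * hascR - ((-1 : ℝ) ^ m) * F3
    - (((n + n - m)! : ℕ) : ℝ) * hsgn

lemma hp_tail (n k : ℕ) :
    hpC n (2 * n + 1 + k) = ((n + k)! : ℝ) / (k ! * (2 * n + 1 + k)!) := by
  have hprod : ∏ j ∈ range n, (((2 * n + 1 + k : ℕ) : ℝ) - n - 1 - j)
      = (((n + k).descFactorial n : ℕ) : ℝ) := by
    have e : ∀ j ∈ range n, (((2 * n + 1 + k : ℕ) : ℝ) - n - 1 - j)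
        = (((n + k - j : ℕ) : ℝ)) := by
      intro j hj
      have hj' : j ≤ n + k := by have := Finset.mem_range.1 hj; omega
      push_cast [Nat.cast_sub hj']
      ring
    rw [Finset.prod_congr rfl e, ← Nat.cast_prod, Nat.descFactorial_eq_prod_range]
  have hdesc : k ! * ((n + k).descFactorial n) = (n + k)! := by
    have h2 := Nat.factorial_mul_descFactorial (show n ≤ n + k by omega)
    rw [show n + k - n = k from by omega] at h2
    exact h2
  have hdescR : (k ! : ℝ) * (((n + k).descFactorial n : ℕ) : ℝ) = ((n + k)! : ℝ) := by
    exact_mod_cast congrArg (Nat.cast : ℕ → ℝ) hdesc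
  rw [hpC, hprod, div_eq_div_iff (Nat.cast_ne_zero.2 (Nat.factorial_ne_zero _))
    (by positivity)]
  linear_combination (((2 * n + 1 + k)! : ℕ) : ℝ) * hdescR

lemma hp_part1 (n : ℕ) (x : ℝ) :
    Real.exp x * (∑ i ∈ range (n + 1), (hpA n i : ℝ) * x ^ i)
        - ∑ i ∈ range (n + 1), (((-1 : ℤ) ^ i * hpA n i : ℤ) : ℝ) * x ^ i
      = ∑' k : ℕ, ((n + k)! : ℝ) / (k ! * (2 * n + 1 + k)!) * x ^ (2 * n + 1 + k) := by
  rw [hp_core, ← Summable.sum_add_tsum_nat_add (2 * n + 1) (hpC_summable n x)]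
  have hhead : ∑ m ∈ range (2 * n + 1), hpC n m * x ^ m
      = ∑ i ∈ range (n + 1), (((-1 : ℤ) ^ i * hpA n i : ℤ) : ℝ) * x ^ i := by
    rw [← Finset.sum_subset (show range (n + 1) ⊆ range (2 * n + 1) from
        Finset.range_subset_range.2 (by omega))
      (fun m hm hm' => by
        rw [hp_head_zero n m
          (by simp only [Finset.mem_range, not_lt] at hm'; omega)
          (Finset.mem_range.1 hm), zero_mul])]
    exact Finset.sum_congr rfl fun m hm =>
      by rw [hp_head_eq n m (by simpa [Nat.lt_succ_iff] using hm)]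
  have htail : ∑' k : ℕ, hpC n (k + (2 * n + 1)) * x ^ (k + (2 * n + 1))
      = ∑' k : ℕ, ((n + k)! : ℝ) / (k ! * (2 * n + 1 + k)!) * x ^ (2 * n + 1 + k) := by
    refine tsum_congr fun k => ?_
    rw [show k + (2 * n + 1) = 2 * n + 1 + k from by omega, hp_tail]
  rw [hhead, htail]
  ring

-- polynomials
noncomputable def hpPhi (n : ℕ) : Polynomial ℤ :=
  ∑ i ∈ range (n + 1), Polynomial.monomial i (hpA n i)

noncomputable def hpPsi (n : ℕ) : Polynomial ℤ :=
  ∑ i ∈ range (n + 1), Polynomial.monomial i ((-1) ^ i * hpA n i)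

lemma hp_poly_degree (c : ℕ → ℤ) (n : ℕ) (hc : c n ≠ 0) :
    (∑ i ∈ range (n + 1), Polynomial.monomial i (c i)).degree = n := by
  apply Polynomial.degree_eq_of_le_of_coeff_ne_zero
  · refine (Polynomial.degree_sum_le _ _).trans (Finset.sup_le fun i hi => ?_)
    refine (Polynomial.degree_monomial_le i _).trans ?_
    exact_mod_cast Nat.cast_le.2 (by simpa [Nat.lt_succ_iff] using hi)
  · rw [Polynomial.finset_sum_coeff]
    simp only [Polynomial.coeff_monomial]
    rw [Finset.sum_ite_eq' (range (n + 1)) n c]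
    simpa using hc

lemma hp_aeval (c : ℕ → ℤ) (n : ℕ) (x : ℝ) :
    Polynomial.aeval x (∑ i ∈ range (n + 1), Polynomial.monomial i (c i))
      = ∑ i ∈ range (n + 1), (c i : ℝ) * x ^ i := by
  rw [map_sum]
  exact Finset.sum_congr rfl fun i _ => by
    rw [Polynomial.aeval_monomial]
    simp [mul_comm]


noncomputable def hpc2 (n m k : ℕ) : ℝ := ((m + k)! : ℝ) / (k ! * ((n + 1 + m + k)!))

noncomputable def hpG (n m : ℕ) (t : ℝ) : ℝ := ∑' k : ℕ, hpc2 n m k * t ^ k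

lemma hpc2_nonneg (n m k : ℕ) : 0 ≤ hpc2 n m k := by
  unfold hpc2; positivity

lemma hpc2_le (n m k : ℕ) : hpc2 n m k ≤ 1 / k ! := by
  rw [hpc2, show (1 : ℝ) / k ! = ((n + 1 + m + k)! : ℝ) / (k ! * (n + 1 + m + k)!) from by
    rw [div_eq_div_iff (by positivity) (by positivity)]; ring]
  gcongr
  omega

lemma hpc2_succ (n m k : ℕ) : hpc2 n m (k + 1) * (k + 1) = hpc2 n (m + 1) k := by
  rw [hpc2, hpc2, show m + (k + 1) = m + 1 + k from by omega,
    show n + 1 + m + (k + 1) = n + 1 + (m + 1) + k from by omega,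
    Nat.factorial_succ]
  have h1 : (k ! : ℝ) ≠ 0 := Nat.cast_ne_zero.2 (Nat.factorial_ne_zero k)
  have h2 : ((n + 1 + (m + 1) + k)! : ℝ) ≠ 0 := Nat.cast_ne_zero.2 (Nat.factorial_ne_zero _)
  field_simp
  push_cast
  ring

lemma hpG_summable (n m : ℕ) (t : ℝ) : Summable (fun k => hpc2 n m k * t ^ k) := by
  refine Summable.of_norm_bounded (g := fun k => |t| ^ k / k !)
    ((Real.summable_pow_div_factorial |t|).congr fun k => rfl) fun k => ?_
  rw [norm_mul, norm_pow, Real.norm_eq_abs, Real.norm_eq_abs,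
    abs_of_nonneg (hpc2_nonneg n m k)]
  calc hpc2 n m k * |t| ^ k ≤ (1 / k !) * |t| ^ k := by
        gcongr; exact hpc2_le n m k
    _ = |t| ^ k / k ! := by ring

lemma hpG_hasDerivAt (n m : ℕ) (x : ℝ) : HasDerivAt (hpG n m) (hpG n (m + 1) x) x := by
  set R : ℝ := |x| + 1 with hR
  have hxR : x ∈ Metric.ball (0 : ℝ) R := by
    simp only [Metric.mem_ball, dist_zero_right, Real.norm_eq_abs]
    simp [hR]
  have hu : Summable (fun k => hpc2 n m k * (k * R ^ (k - 1))) := by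
    rw [← summable_nat_add_iff 1]
    have : (fun k : ℕ => hpc2 n m (k + 1) * ((k + 1 : ℕ) * R ^ (k + 1 - 1)))
        = fun k => hpc2 n (m + 1) k * R ^ k := by
      funext k
      rw [show (k + 1 : ℕ) - 1 = k from rfl, ← hpc2_succ n m k]
      push_cast
      ring
    rw [this]
    exact hpG_summable n (m + 1) R
  have key : HasDerivAt (fun z => ∑' k : ℕ, hpc2 n m k * z ^ k)
      (∑' k : ℕ, hpc2 n m k * (k * x ^ (k - 1))) x := by
    refine hasDerivAt_tsum_of_isPreconnected hu Metric.isOpen_ball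
      (convex_ball (0 : ℝ) R).isPreconnected
      (fun k y _ => (hasDerivAt_pow k y).const_mul (hpc2 n m k)) (fun k y hy => ?_) hxR
      (hpG_summable n m x) hxR
    rw [Real.norm_eq_abs, abs_mul, abs_of_nonneg (hpc2_nonneg n m k), abs_mul,
      abs_pow, Nat.abs_cast]
    have hyR : |y| ≤ R := by
      rw [Metric.mem_ball, Real.dist_eq, sub_zero] at hy
      exact le_of_lt hy
    gcongr
    exact hpc2_nonneg n m k
  have hval : ∑' k : ℕ, hpc2 n m k * (k * x ^ (k - 1)) = hpG n (m + 1) x := by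
    have hs : Summable (fun k : ℕ => hpc2 n m k * (k * x ^ (k - 1))) := by
      rw [← summable_nat_add_iff 1]
      have : (fun k : ℕ => hpc2 n m (k + 1) * ((k + 1 : ℕ) * x ^ (k + 1 - 1)))
          = fun k => hpc2 n (m + 1) k * x ^ k := by
        funext k
        rw [show (k + 1 : ℕ) - 1 = k from rfl, ← hpc2_succ n m k]
        push_cast
        ring
      rw [this]
      exact hpG_summable n (m + 1) x
    rw [Summable.tsum_eq_zero_add hs]
    simp only [Nat.cast_zero, zero_mul, mul_zero, zero_add]
    rw [hpG]
    refine tsum_congr fun k => ?_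
    rw [show (k + 1 : ℕ) - 1 = k from rfl, ← hpc2_succ n m k]
    push_cast
    ring
  rw [← hval]
  exact key

lemma hpG_iteratedDeriv (n : ℕ) : ∀ m, iteratedDeriv m (hpG n 0) = hpG n m
  | 0 => iteratedDeriv_zero ..
  | m + 1 => by
    rw [iteratedDeriv_succ, hpG_iteratedDeriv n m]
    funext x
    exact (hpG_hasDerivAt n m x).deriv

lemma hpG_eq (n : ℕ) (t : ℝ) (ht : t ≠ 0) :
    (Real.exp t - ∑ j ∈ Finset.range (n + 1), t ^ j / (j ! : ℝ)) / t ^ (n + 1)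
      = hpG n 0 t := by
  have hsplit := Summable.sum_add_tsum_nat_add (f := fun m : ℕ => t ^ m / m !) (n + 1)
    (Real.summable_pow_div_factorial t)
  have hnum : Real.exp t - ∑ j ∈ Finset.range (n + 1), t ^ j / (j ! : ℝ)
      = ∑' k : ℕ, t ^ (k + (n + 1)) / (k + (n + 1))! := by
    rw [hp_exp, ← hsplit]
    ring
  have htail : ∑' k : ℕ, t ^ (k + (n + 1)) / ((k + (n + 1))! : ℝ)
      = t ^ (n + 1) * hpG n 0 t := by
    rw [hpG, ← tsum_mul_left]
    refine tsum_congr fun k => ?_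
    rw [hpc2, show n + 1 + 0 + k = k + (n + 1) from by omega, zero_add, pow_add]
    have h1 : (k ! : ℝ) ≠ 0 := Nat.cast_ne_zero.2 (Nat.factorial_ne_zero k)
    field_simp
  rw [hnum, htail, mul_comm, mul_div_assoc, div_self (pow_ne_zero _ ht), mul_one]

lemma hp_part2 (n : ℕ) (x : ℝ) (hx : x ≠ 0) :
    iteratedDeriv n
        (fun t : ℝ =>
          (Real.exp t - ∑ j ∈ Finset.range (n + 1), t ^ j / (j ! : ℝ)) / t ^ (n + 1)) x
      = hpG n n x := by
  have hev : (fun t : ℝ =>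
      (Real.exp t - ∑ j ∈ Finset.range (n + 1), t ^ j / (j ! : ℝ)) / t ^ (n + 1))
      =ᶠ[nhds x] hpG n 0 := by
    filter_upwards [isOpen_compl_singleton.mem_nhds (by simpa using hx :
      x ∈ ({(0 : ℝ)}ᶜ : Set ℝ))] with t ht
    exact hpG_eq n t ht
  rw [hev.iteratedDeriv_eq n, hpG_iteratedDeriv n n]

lemma hpG_final (n : ℕ) (x : ℝ) (hx : x ≠ 0) :
    hpG n n x = (∑' k : ℕ, ((n + k)! : ℝ) / (k ! * (2 * n + 1 + k)!) * x ^ (2 * n + 1 + k))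
      / x ^ (2 * n + 1) := by
  rw [eq_div_iff (pow_ne_zero _ hx), hpG, ← tsum_mul_right]
  refine tsum_congr fun k => ?_
  rw [hpc2, show n + 1 + n + k = 2 * n + 1 + k from by omega, pow_add]
  ring


end HermitePadeAux

/-- Hermite's Padé approximants of the exponential (letter of December 3, 1875):
for every `n` there are integer polynomials `φ`, `ψ` of degree `n` with
`exp x * φ x - ψ x = ∑_{k} ((n+k)!/(k!(2n+1+k)!)) x^(2n+1+k)` and, for `x ≠ 0`,
the `n`-th derivative of `(exp t - ∑_{j≤n} t^j/j!)/t^(n+1)` equals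
`(exp x * φ x - ψ x)/x^(2n+1)`. -/
theorem hermite_pade_exp (n : ℕ) :
    ∃ φ ψ : Polynomial ℤ, φ.degree = n ∧ ψ.degree = n ∧
      (∀ x : ℝ,
        Real.exp x * Polynomial.aeval x φ - Polynomial.aeval x ψ =
          ∑' k : ℕ, ((Nat.factorial (n + k) : ℝ) /
            (Nat.factorial k * Nat.factorial (2 * n + 1 + k))) * x ^ (2 * n + 1 + k)) ∧
      (∀ x : ℝ, x ≠ 0 →
        iteratedDeriv n
          (fun t : ℝ =>
            (Real.exp t - ∑ j ∈ Finset.range (n + 1), t ^ j / (Nat.factorial j : ℝ)) /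
              t ^ (n + 1)) x =
          (Real.exp x * Polynomial.aeval x φ - Polynomial.aeval x ψ) / x ^ (2 * n + 1)) := by
  refine ⟨hpPhi n, hpPsi n,
    hp_poly_degree _ n (by rw [hpA_self]; exact one_ne_zero),
    hp_poly_degree _ n (by rw [hpA_self]; simp), fun x => ?_, fun x hx => ?_⟩
  · rw [hpPhi, hpPsi, hp_aeval, hp_aeval]
    exact hp_part1 n x
  · rw [hp_part2 n x hx, hpG_final n x hx, hpPhi, hpPsi, hp_aeval, hp_aeval, hp_part1 n x]
end

section
/- For every natural number n and every real x, the n-th derivative of the function t ↦ Σ_{m=0}^{∞} t^m/(n+1+m)! at x equals Σ_{k=0}^{∞} ((n+k)!/(k!·(2n+1+k)!))·x^k. -/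
open scoped Nat

/-- The coefficient after `j` termwise derivatives. -/
private noncomputable def hermiteCoeff (c j m : ℕ) : ℝ :=
  (Nat.factorial (m + j) : ℝ) / (Nat.factorial m * Nat.factorial (c + j + m))

private lemma hermiteCoeff_abs_le (c j m : ℕ) :
    |hermiteCoeff c j m| ≤ 1 / Nat.factorial m := by
  have h1 : (0:ℝ) < Nat.factorial m := by exact_mod_cast (Nat.factorial_pos m)
  have h2 : (0:ℝ) < Nat.factorial (c + j + m) := by exact_mod_cast Nat.factorial_pos _
  have h3 : (Nat.factorial (m + j) : ℝ) ≤ Nat.factorial (c + j + m) := by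
    exact_mod_cast Nat.factorial_le (by omega)
  have hpos : 0 ≤ hermiteCoeff c j m := by
    apply div_nonneg (by positivity) (by positivity)
  rw [abs_of_nonneg hpos, hermiteCoeff, div_le_div_iff₀ (by positivity) h1]
  calc (Nat.factorial (m + j) : ℝ) * Nat.factorial m
      ≤ (Nat.factorial (c + j + m) : ℝ) * Nat.factorial m := by
        exact mul_le_mul_of_nonneg_right h3 h1.le
    _ = 1 * (Nat.factorial m * Nat.factorial (c + j + m)) := by ring

private lemma hermite_aux (c j : ℕ) (x : ℝ) :
    iteratedDeriv j (fun t : ℝ => ∑' m : ℕ, t ^ m / (Nat.factorial (c + m) : ℝ)) x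
      = ∑' m : ℕ, hermiteCoeff c j m * x ^ m := by
  induction j generalizing x with
  | zero =>
    rw [iteratedDeriv_zero]
    refine tsum_congr fun m => ?_
    have h1 : ((Nat.factorial m : ℝ)) ≠ 0 := by exact_mod_cast (Nat.factorial_pos m).ne'
    have h2 : ((Nat.factorial (c + m) : ℝ)) ≠ 0 := by exact_mod_cast (Nat.factorial_pos _).ne'
    simp only [hermiteCoeff, Nat.add_zero, Nat.add_zero]
    field_simp
  | succ j IH =>
    rw [iteratedDeriv_succ, funext IH]
    set R : ℝ := |x| + 1 with hR
    have hR1 : (1:ℝ) ≤ R := by rw [hR]; linarith [abs_nonneg x]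
    have hxR : x ∈ Metric.ball (0:ℝ) R := by
      rw [Metric.mem_ball, Real.dist_eq, sub_zero, hR]; linarith [abs_nonneg x]
    -- summable bound
    set u : ℕ → ℝ := fun m => (m : ℝ) * R ^ (m - 1) / Nat.factorial m with hu
    have hu_sum : Summable u := by
      rw [← summable_nat_add_iff 1]
      have : (fun m : ℕ => u (m + 1)) = fun m : ℕ => R ^ m / Nat.factorial m := by
        funext m
        have : ((m+1).factorial : ℝ) = (m+1) * m.factorial := by
          exact_mod_cast Nat.factorial_succ m
        simp only [hu, Nat.add_sub_cancel, this]
        have hm : ((m:ℝ) + 1) ≠ 0 := by positivity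
        have hf : ((m.factorial : ℝ)) ≠ 0 := by exact_mod_cast (Nat.factorial_pos m).ne'
        push_cast
        field_simp
      rw [this]
      exact Real.summable_pow_div_factorial R
    have key : HasDerivAt (fun z : ℝ => ∑' m : ℕ, hermiteCoeff c j m * z ^ m)
        (∑' m : ℕ, hermiteCoeff c j m * ((m : ℝ) * x ^ (m - 1))) x := by
      refine hasDerivAt_tsum_of_isPreconnected hu_sum Metric.isOpen_ball
         (convex_ball (0:ℝ) R).isPreconnected
        (fun m y _ => (hasDerivAt_pow m y).const_mul (hermiteCoeff c j m))
        (fun m y hy => ?_) (Metric.mem_ball_self (by positivity)) ?_ hxR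
      · have hyR : |y| ≤ R := by
          have := hy; rw [Metric.mem_ball, Real.dist_eq, sub_zero] at this; linarith
        have hb := hermiteCoeff_abs_le c j m
        have hpow : |y| ^ (m - 1) ≤ R ^ (m - 1) :=
          pow_le_pow_left₀ (abs_nonneg y) hyR _
        calc ‖hermiteCoeff c j m * ((m:ℝ) * y ^ (m-1))‖
            = |hermiteCoeff c j m| * ((m:ℝ) * |y| ^ (m-1)) := by
              rw [norm_mul, Real.norm_eq_abs, Real.norm_eq_abs, abs_mul, abs_pow,
                Nat.abs_cast]
          _ ≤ (1 / Nat.factorial m) * ((m:ℝ) * R ^ (m-1)) := by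
              apply mul_le_mul hb _ (by positivity) (by positivity)
              exact mul_le_mul_of_nonneg_left hpow (by positivity)
          _ = u m := by rw [hu]; ring
      · apply summable_of_ne_finset_zero (s := {0})
        intro m hm
        have : m ≠ 0 := by simpa using hm
        simp [zero_pow this]
    rw [key.deriv]
    have hsum : Summable fun m : ℕ => hermiteCoeff c j m * ((m : ℝ) * x ^ (m - 1)) := by
      apply Summable.of_norm_bounded hu_sum
      intro m
      have hb := hermiteCoeff_abs_le c j m
      have hpow : |x| ^ (m - 1) ≤ R ^ (m - 1) :=
        pow_le_pow_left₀ (abs_nonneg x) (by rw [hR]; linarith [abs_nonneg x]) _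
      calc ‖hermiteCoeff c j m * ((m:ℝ) * x ^ (m-1))‖
          = |hermiteCoeff c j m| * ((m:ℝ) * |x| ^ (m-1)) := by
            rw [norm_mul, Real.norm_eq_abs, Real.norm_eq_abs, abs_mul, abs_pow, Nat.abs_cast]
        _ ≤ (1 / Nat.factorial m) * ((m:ℝ) * R ^ (m-1)) := by
            apply mul_le_mul hb _ (by positivity) (by positivity)
            exact mul_le_mul_of_nonneg_left hpow (by positivity)
        _ = u m := by rw [hu]; ring
    rw [Summable.tsum_eq_zero_add hsum]
    simp only [Nat.cast_zero, zero_mul, mul_zero, zero_add]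
    refine tsum_congr fun m => ?_
    have e1 : m + 1 + j = m + (j + 1) := by omega
    have e2 : c + j + (m + 1) = c + (j + 1) + m := by omega
    simp only [hermiteCoeff, e1, e2, Nat.add_sub_cancel]
    have hfs : ((m+1).factorial : ℝ) = (m+1) * m.factorial := by
      exact_mod_cast Nat.factorial_succ m
    rw [hfs]
    have hm : ((m:ℝ) + 1) ≠ 0 := by positivity
    have hf : ((m.factorial : ℝ)) ≠ 0 := by exact_mod_cast (Nat.factorial_pos m).ne'
    have hf2 : ((Nat.factorial (c + (j+1) + m) : ℝ)) ≠ 0 := by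
      exact_mod_cast (Nat.factorial_pos _).ne'
    push_cast
    field_simp

/-- Hermite, letter of December 3, 1875: the `n`-th derivative of
`t ↦ ∑_m t^m/(n+1+m)!` at `x` is `∑_k ((n+k)!/(k!(2n+1+k)!)) x^k`. -/
theorem iteratedDeriv_tsum_inv_factorial (n : ℕ) (x : ℝ) :
    iteratedDeriv n (fun t : ℝ => ∑' m : ℕ, t ^ m / (Nat.factorial (n + 1 + m) : ℝ)) x =
      ∑' k : ℕ, ((Nat.factorial (n + k) : ℝ) /
        (Nat.factorial k * Nat.factorial (2 * n + 1 + k))) * x ^ k := by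
  rw [hermite_aux (n + 1) n x]
  refine tsum_congr fun k => ?_
  have e1 : k + n = n + k := by omega
  have e2 : n + 1 + n + k = 2 * n + 1 + k := by omega
  simp only [hermiteCoeff, e1, e2]
end

section
/- For every positive integer m, the real number e^m = exp(m) is irrational. -/
open Polynomial Filter
open scoped Nat

namespace LambertAux

/-- The Hermite polynomial `X^n (m - X)^n` over `ℤ`. -/
noncomputable def P (m n : ℕ) : ℤ[X] := X ^ n * (C (m : ℤ) - X) ^ n

lemma natDegree_P_le (m n : ℕ) : (P m n).natDegree ≤ 2 * n := by
  unfold P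
  refine (natDegree_mul_le).trans ?_
  have h1 : (X ^ n : ℤ[X]).natDegree ≤ n := natDegree_X_pow_le n
  have h2 : ((C (m : ℤ) - X) ^ n).natDegree ≤ n := by
    refine (natDegree_pow_le).trans ?_
    have : (C (m : ℤ) - X).natDegree ≤ 1 := by
      refine (natDegree_sub_le _ _).trans ?_
      simp [natDegree_C, natDegree_X]
    calc n * (C (m : ℤ) - X).natDegree ≤ n * 1 := Nat.mul_le_mul_left _ this
      _ = n := mul_one n
  omega

lemma sub_derivative_sumIDeriv (p : ℤ[X]) :
    sumIDeriv p - derivative (sumIDeriv p) = p := by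
  have h := sumIDeriv_eq_self_add p
  linear_combination h

/-- `n!` divides the value of `sumIDeriv (P m n)` at `0`. -/
lemma factorial_dvd_eval_zero (m n : ℕ) :
    (n ! : ℤ) ∣ (sumIDeriv (P m n)).eval 0 := by
  obtain ⟨gp, -, hgp⟩ := aeval_sumIDeriv (A := ℤ) (P m n) n
  have hmap : (P m n).map (algebraMap ℤ ℤ) = (X - C (0 : ℤ)) ^ n * (C (m : ℤ) - X) ^ n := by
    rw [Algebra.algebraMap_self, Polynomial.map_id]
    simp [P]
  have := hgp (0 : ℤ) ⟨_, hmap⟩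
  simp only [aeval_def, eval₂_at_zero, Algebra.algebraMap_self, RingHom.id_apply,
    zsmul_eq_mul, nsmul_eq_mul] at this
  rw [show ((sumIDeriv (P m n)).eval 0) = (sumIDeriv (P m n)).coeff 0 by
    simp [Polynomial.eval_zero, coeff_zero_eq_eval_zero]]
  rw [coeff_zero_eq_eval_zero] at this ⊢
  exact ⟨_, by exact_mod_cast this⟩

/-- `n!` divides the value of `sumIDeriv (P m n)` at `m`. -/
lemma factorial_dvd_eval_m (m n : ℕ) :
    (n ! : ℤ) ∣ (sumIDeriv (P m n)).eval (m : ℤ) := by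
  obtain ⟨gp, -, hgp⟩ := aeval_sumIDeriv (A := ℤ) (P m n) n
  have hmap : (P m n).map (algebraMap ℤ ℤ)
      = (X - C (m : ℤ)) ^ n * ((-1 : ℤ[X]) ^ n * X ^ n) := by
    rw [Algebra.algebraMap_self, Polynomial.map_id]
    unfold P
    have h : (C (m : ℤ) - X) = -(X - C (m : ℤ)) := by ring
    rw [h, neg_pow]
    ring
  have := hgp ((m : ℤ)) ⟨_, hmap⟩
  simp only [aeval_def, eval₂_eq_eval_map, Algebra.algebraMap_self, Polynomial.map_id,
    zsmul_eq_mul, nsmul_eq_mul] at this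
  exact ⟨_, by exact_mod_cast this⟩

end LambertAux

/-- Lambert's theorem: every positive integer power of `e` is irrational. -/
theorem irrational_exp_nat_pos (m : ℕ) (hm : 0 < m) : Irrational (Real.exp m) := by
  open LambertAux in
  rintro ⟨r, hr⟩
  have hrpos : (0 : ℚ) < r := by
    have h := Real.exp_pos (m : ℝ)
    rw [← hr] at h
    exact_mod_cast h
  set a : ℤ := r.num with ha_def
  set b : ℕ := r.den with hb_def
  have ha : 0 < a := Rat.num_pos.mpr hrpos
  have hb : 0 < b := r.pos
  have hb0 : (b : ℝ) ≠ 0 := by positivity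
  have hab : (a : ℝ) = Real.exp m * b := by
    have h1 : (r : ℝ) = (a : ℝ) / (b : ℝ) := by
      rw [Rat.cast_def, ha_def, hb_def]
    rw [hr] at h1
    field_simp at h1
    linarith
  -- choose n large
  set K : ℝ := (b : ℝ) * Real.exp m * m with hK_def
  obtain ⟨n, hn⟩ := (FloorSemiring.eventually_mul_pow_lt_factorial_sub K ((m : ℝ) ^ 2) 0).exists
  rw [Nat.sub_zero] at hn
  -- the machinery
  set F : ℤ[X] := sumIDeriv (P m n) with hF_def
  set Pr : ℝ[X] := (P m n).map (Int.castRingHom ℝ) with hPr_def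
  set Fr : ℝ[X] := F.map (Int.castRingHom ℝ) with hFr_def
  have hPr_eval : ∀ x : ℝ, Pr.eval x = x ^ n * ((m : ℝ) - x) ^ n := by
    intro x
    simp [hPr_def, P, Polynomial.eval_map, Polynomial.eval₂_mul, Polynomial.eval₂_pow]
  -- integral identity
  have hderiv : ∀ x : ℝ, HasDerivAt (fun x : ℝ => -(Fr.eval x * Real.exp (-x)))
      (Pr.eval x * Real.exp (-x)) x := by
    intro x
    have h1 : HasDerivAt (fun x : ℝ => Fr.eval x) (Fr.derivative.eval x) x :=
      Polynomial.hasDerivAt Fr x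
    have h2 : HasDerivAt (fun x : ℝ => Real.exp (-x)) (Real.exp (-x) * (-1)) x :=
      (hasDerivAt_neg x).exp
    have h3 := (h1.mul h2).neg
    refine h3.congr_deriv ?_
    have key : Fr - derivative Fr = Pr := by
      rw [hFr_def, hPr_def, derivative_map, ← Polynomial.map_sub, hF_def,
        sub_derivative_sumIDeriv]
    have : Pr.eval x = Fr.eval x - Fr.derivative.eval x := by
      rw [← key]; simp
    rw [this]; ring
  have hcont : Continuous fun x : ℝ => Pr.eval x * Real.exp (-x) := by
    exact (Pr.continuous_aeval).mul (Real.continuous_exp.comp continuous_neg)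
  set I : ℝ := ∫ x in (0:ℝ)..(m:ℝ), Pr.eval x * Real.exp (-x) with hI_def
  have hI_eq : I = Fr.eval 0 - Fr.eval (m : ℝ) * Real.exp (-(m : ℝ)) := by
    rw [hI_def, intervalIntegral.integral_eq_sub_of_hasDerivAt
      (fun x _ => hderiv x) (hcont.intervalIntegrable _ _)]
    simp
    ring
  have hm' : (0 : ℝ) < m := by exact_mod_cast hm
  -- positivity
  have hI_pos : 0 < I := by
    refine intervalIntegral.intervalIntegral_pos_of_pos_on
      (hcont.intervalIntegrable _ _) (fun x hx => ?_) hm'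
    obtain ⟨hx0, hxm⟩ := hx
    rw [hPr_eval]
    have : 0 < (m : ℝ) - x := by linarith
    positivity
  -- upper bound
  have hI_le : I ≤ ((m : ℝ) ^ 2) ^ n * m := by
    have hb1 : ∀ x ∈ Set.uIoc (0:ℝ) (m:ℝ), ‖Pr.eval x * Real.exp (-x)‖ ≤ ((m : ℝ) ^ 2) ^ n := by
      intro x hx
      rw [Set.uIoc_of_le hm'.le] at hx
      obtain ⟨hx0, hxm⟩ := hx
      rw [hPr_eval]
      have h1 : 0 ≤ (m : ℝ) - x := by linarith
      have h2 : Real.exp (-x) ≤ 1 := Real.exp_le_one_iff.mpr (by linarith)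
      have h3 : (0:ℝ) < Real.exp (-x) := Real.exp_pos _
      rw [Real.norm_eq_abs, abs_of_nonneg (by positivity)]
      calc x ^ n * ((m : ℝ) - x) ^ n * Real.exp (-x)
          ≤ (m : ℝ) ^ n * (m : ℝ) ^ n * 1 := by
            apply mul_le_mul _ h2 h3.le (by positivity)
            apply mul_le_mul (pow_le_pow_left₀ hx0.le hxm n)
              (pow_le_pow_left₀ h1 (by linarith) n) (by positivity) (by positivity)
        _ = ((m : ℝ) ^ 2) ^ n := by ring
    have := intervalIntegral.norm_integral_le_of_norm_le_const hb1
    rw [← hI_def] at this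
    have h4 : |(m : ℝ) - 0| = (m : ℝ) := by rw [sub_zero, abs_of_pos hm']
    rw [h4] at this
    calc I ≤ ‖I‖ := le_abs_self I
      _ ≤ ((m : ℝ) ^ 2) ^ n * m := this
  -- integer arithmetic
  obtain ⟨c0, hc0⟩ := factorial_dvd_eval_zero m n
  obtain ⟨cm, hcm⟩ := factorial_dvd_eval_m m n
  have hFr0 : Fr.eval 0 = ((F.eval 0 : ℤ) : ℝ) := by
    have := Polynomial.eval_intCast_map (Int.castRingHom ℝ) F 0
    simpa [hFr_def] using this
  have hFrm : Fr.eval (m : ℝ) = ((F.eval (m : ℤ) : ℤ) : ℝ) := by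
    have := Polynomial.eval_intCast_map (Int.castRingHom ℝ) F (m : ℤ)
    simpa [hFr_def] using this
  have hexp : Real.exp m * Real.exp (-(m : ℝ)) = 1 := by
    rw [← Real.exp_add]; simp
  set J : ℤ := a * c0 - b * cm with hJ_def
  have key : (b : ℝ) * Real.exp m * I = ((n ! : ℤ) : ℝ) * (J : ℝ) := by
    rw [hI_eq, hFr0, hFrm, hc0, hcm, hJ_def]
    push_cast
    have hab' : (a : ℝ) = Real.exp m * b := hab
    linear_combination (-(n ! : ℝ) * (c0 : ℝ)) * hab' + (-(n ! : ℝ) * (b : ℝ) * (cm : ℝ)) * hexp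
  have hbexp : (0 : ℝ) < (b : ℝ) * Real.exp m := by positivity
  have hpos : (0 : ℝ) < ((n ! : ℤ) : ℝ) * (J : ℝ) := by
    rw [← key]; positivity
  have hJpos : 0 < J := by
    by_contra h
    push_neg at h
    have : ((n ! : ℤ) : ℝ) * (J : ℝ) ≤ 0 := by
      apply mul_nonpos_of_nonneg_of_nonpos
      · exact_mod_cast Nat.cast_nonneg _
      · exact_mod_cast h
    linarith
  have hJ1 : (1 : ℝ) ≤ (J : ℝ) := by exact_mod_cast hJpos
  have hfac : (n ! : ℝ) ≤ (b : ℝ) * Real.exp m * I := by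
    rw [key]
    push_cast
    have hfn : (0 : ℝ) ≤ (n ! : ℝ) := Nat.cast_nonneg _
    nlinarith [hJ1, hfn]
  have hfinal : (b : ℝ) * Real.exp m * I ≤ K * ((m : ℝ) ^ 2) ^ n := by
    rw [hK_def]
    calc (b : ℝ) * Real.exp m * I ≤ (b : ℝ) * Real.exp m * (((m : ℝ) ^ 2) ^ n * m) := by
          apply mul_le_mul_of_nonneg_left hI_le hbexp.le
      _ = (b : ℝ) * Real.exp m * m * ((m : ℝ) ^ 2) ^ n := by ring
  linarith
end

section
/- For every real x > 0 and every natural number n, the quantity R_n(x) = Σ_{k=0}^{∞} ((n+k)!/(k!·(2n+1+k)!))·x^{2n+1+k} satisfies 0 < R_n(x) ≤ (n!/(2n+1)!)·x^{2n+1}·exp(x); consequently, for every fixed x > 0 the sequence n ↦ R_n(x) tends to 0 as n → ∞. -/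
lemma fact_key (n : ℕ) : ∀ k : ℕ,
    Nat.factorial (n + k) * Nat.factorial (2 * n + 1) ≤
      Nat.factorial n * Nat.factorial (2 * n + 1 + k) := by
  intro k
  induction k with
  | zero => simp [Nat.mul_comm]
  | succ k ih =>
      have h1 : Nat.factorial (n + (k + 1)) * Nat.factorial (2 * n + 1) =
          (n + k + 1) * (Nat.factorial (n + k) * Nat.factorial (2 * n + 1)) := by
        rw [show n + (k + 1) = (n + k) + 1 by ring, Nat.factorial_succ]; ring
      have h2 : Nat.factorial n * Nat.factorial (2 * n + 1 + (k + 1)) =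
          (2 * n + 1 + k + 1) * (Nat.factorial n * Nat.factorial (2 * n + 1 + k)) := by
        rw [show 2 * n + 1 + (k + 1) = (2 * n + 1 + k) + 1 by ring, Nat.factorial_succ]; ring
      rw [h1, h2]
      exact Nat.mul_le_mul (by omega) ih

lemma fact_key2 (n : ℕ) :
    Nat.factorial n * Nat.factorial n ≤ Nat.factorial (2 * n + 1) := by
  have h := Nat.factorial_mul_factorial_dvd_factorial_add n (n + 1)
  have h' : n + (n + 1) = 2 * n + 1 := by ring
  rw [h'] at h
  calc Nat.factorial n * Nat.factorial n
      ≤ Nat.factorial n * Nat.factorial (n + 1) :=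
        Nat.mul_le_mul_left _ (Nat.factorial_le (by omega))
    _ ≤ Nat.factorial (2 * n + 1) := Nat.le_of_dvd (Nat.factorial_pos _) h

/-- Hermite's key estimate (letter of December 3, 1875): for `x > 0`,
`0 < R_n(x) ≤ (n!/(2n+1)!) x^(2n+1) exp x`, hence `R_n(x) → 0` as `n → ∞`. -/
theorem hermite_remainder_estimate (x : ℝ) (hx : 0 < x) :
    (∀ n : ℕ,
      0 < ∑' k : ℕ, ((Nat.factorial (n + k) : ℝ) /
          (Nat.factorial k * Nat.factorial (2 * n + 1 + k))) * x ^ (2 * n + 1 + k) ∧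
      ∑' k : ℕ, ((Nat.factorial (n + k) : ℝ) /
          (Nat.factorial k * Nat.factorial (2 * n + 1 + k))) * x ^ (2 * n + 1 + k) ≤
        ((Nat.factorial n : ℝ) / Nat.factorial (2 * n + 1)) * x ^ (2 * n + 1) * Real.exp x) ∧
    Filter.Tendsto
      (fun n : ℕ => ∑' k : ℕ, ((Nat.factorial (n + k) : ℝ) /
        (Nat.factorial k * Nat.factorial (2 * n + 1 + k))) * x ^ (2 * n + 1 + k))
      Filter.atTop (nhds 0) := by
  set a : ℕ → ℕ → ℝ := fun n k => ((Nat.factorial (n + k) : ℝ) /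
      (Nat.factorial k * Nat.factorial (2 * n + 1 + k))) * x ^ (2 * n + 1 + k) with ha
  set b : ℕ → ℕ → ℝ := fun n k =>
      ((Nat.factorial n : ℝ) / Nat.factorial (2 * n + 1)) * x ^ (2 * n + 1) * (x ^ k / Nat.factorial k)
    with hb
  have hapos : ∀ n k, 0 < a n k := fun n k => by
    apply mul_pos
    · apply div_pos (by positivity)
      positivity
    · positivity
  have hab : ∀ n k, a n k ≤ b n k := by
    intro n k
    have hfk : (Nat.factorial (n + k) : ℝ) / Nat.factorial (2 * n + 1 + k) ≤
        (Nat.factorial n : ℝ) / Nat.factorial (2 * n + 1) := by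
      rw [div_le_div_iff₀ (by positivity) (by positivity)]
      have := fact_key n k
      exact_mod_cast this
    have : a n k = ((Nat.factorial (n + k) : ℝ) / Nat.factorial (2 * n + 1 + k)) *
        (x ^ (2 * n + 1 + k) / Nat.factorial k) := by
      simp only [ha]; field_simp
    rw [this]
    have hbeq : b n k = ((Nat.factorial n : ℝ) / Nat.factorial (2 * n + 1)) *
        (x ^ (2 * n + 1 + k) / Nat.factorial k) := by
      simp only [hb, pow_add]; ring
    rw [hbeq]
    apply mul_le_mul_of_nonneg_right hfk (by positivity)
  have hbsum : ∀ n, Summable (b n) := fun n =>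
    (Real.summable_pow_div_factorial x).mul_left _
  have hasum : ∀ n, Summable (a n) := fun n =>
    Summable.of_nonneg_of_le (fun k => (hapos n k).le) (hab n) (hbsum n)
  have htsumb : ∀ n, ∑' k, b n k =
      ((Nat.factorial n : ℝ) / Nat.factorial (2 * n + 1)) * x ^ (2 * n + 1) * Real.exp x := by
    intro n
    rw [hb]
    rw [tsum_mul_left]
    congr 1
    rw [Real.exp_eq_exp_ℝ, NormedSpace.exp_eq_tsum_div]
  have hmain : ∀ n : ℕ, 0 < ∑' k, a n k ∧ ∑' k, a n k ≤
      ((Nat.factorial n : ℝ) / Nat.factorial (2 * n + 1)) * x ^ (2 * n + 1) * Real.exp x := by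
    intro n
    constructor
    · exact Summable.tsum_pos (hasum n) (fun k => (hapos n k).le) 0 (hapos n 0)
    · rw [← htsumb n]
      exact Summable.tsum_le_tsum (hab n) (hasum n) (hbsum n)
  refine ⟨hmain, ?_⟩
  have hg : Filter.Tendsto (fun n : ℕ => (x * Real.exp x) * ((x ^ 2) ^ n / Nat.factorial n))
      Filter.atTop (nhds 0) := by
    have := (Real.summable_pow_div_factorial (x ^ 2)).tendsto_atTop_zero
    simpa using (this.const_mul (x * Real.exp x))
  apply squeeze_zero (fun n => (hmain n).1.le) (fun n => ?_) hg
  refine (hmain n).2.trans ?_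
  have h1 : (Nat.factorial n : ℝ) / Nat.factorial (2 * n + 1) ≤ 1 / Nat.factorial n := by
    rw [div_le_div_iff₀ (by positivity) (by positivity)]
    have := fact_key2 n
    exact_mod_cast by simpa [one_mul] using this
  have hx1 : x ^ (2 * n + 1) = x * (x ^ 2) ^ n := by
    rw [← pow_mul, pow_succ]; ring
  calc ((Nat.factorial n : ℝ) / Nat.factorial (2 * n + 1)) * x ^ (2 * n + 1) * Real.exp x
      ≤ (1 / Nat.factorial n) * x ^ (2 * n + 1) * Real.exp x := by
        apply mul_le_mul_of_nonneg_right (mul_le_mul_of_nonneg_right h1 (by positivity))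
          (Real.exp_pos x).le
    _ = (x * Real.exp x) * ((x ^ 2) ^ n / Nat.factorial n) := by
        rw [hx1]; field_simp
end

section
/- For every natural number n, let P ∈ ℝ[X] be the n-th Legendre polynomial defined by the Rodrigues formula P = (1/(2^n·n!))·D^n((X²−1)^n), where D^n denotes the n-fold formal derivative of polynomials. Then there exist a polynomial Q ∈ ℝ[X] with degree of Q strictly less than n and a constant C ≥ 0 such that for all real x ≥ 2, |P(x)·(1/2)·log((x+1)/(x−1)) − Q(x)| ≤ C/x^{n+1}. -/
open Polynomial

/-- FTC for polynomials. -/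
lemma poly_ftc (q : Polynomial ℝ) (a b : ℝ) :
    ∫ t in a..b, (derivative q).eval t = q.eval b - q.eval a := by
  rw [← intervalIntegral.integral_deriv_eq_sub (f := fun x => q.eval x)
    (fun x _ => q.differentiableAt) ?_]
  · congr 1; ext x; exact (Polynomial.deriv q).symm
  · apply Continuous.intervalIntegrable
    have : (deriv fun x => q.eval x) = fun x => (derivative q).eval x := by
      ext x; exact Polynomial.deriv q
    rw [this]; exact (derivative q).continuous

lemma poly_intble (q : Polynomial ℝ) (a b : ℝ) :
    IntervalIntegrable (fun t => q.eval t) MeasureTheory.volume a b :=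
  (q.continuous).intervalIntegrable a b

lemma vanish (n j : ℕ) (hj : j < n) :
    ∃ h : Polynomial ℝ, derivative^[j] ((X ^ 2 - 1) ^ n) = (X ^ 2 - 1) ^ (n - j) * h := by
  induction j with
  | zero => exact ⟨1, by simp⟩
  | succ j ih =>
    obtain ⟨h, hh⟩ := ih (Nat.lt_of_succ_lt hj)
    obtain ⟨m, hm⟩ : ∃ m, n - j = m + 1 := ⟨n - (j + 1), by omega⟩
    have hm2 : n - (j + 1) = m := by omega
    refine ⟨C ((m + 1 : ℕ) : ℝ) * derivative (X ^ 2 - 1) * h + (X ^ 2 - 1) * derivative h, ?_⟩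
    rw [Function.iterate_succ_apply', hh, hm, hm2, derivative_mul, derivative_pow]
    simp only [Nat.add_sub_cancel]
    ring

lemma eval_iter_deriv_zero (n j : ℕ) (hj : j < n) (y : ℝ) (hy : y ^ 2 = 1) :
    (derivative^[j] ((X ^ 2 - 1 : Polynomial ℝ) ^ n)).eval y = 0 := by
  obtain ⟨h, hh⟩ := vanish n j hj
  rw [hh, eval_mul, eval_pow, eval_sub, eval_pow, eval_one, eval_X, hy, sub_self,
    zero_pow (by omega), zero_mul]

/-- Orthogonality. -/
lemma ortho (n : ℕ) : ∀ k j : ℕ, k < j → j ≤ n →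
    ∫ t in (-1:ℝ)..1, t ^ k * (derivative^[j] ((X ^ 2 - 1 : Polynomial ℝ) ^ n)).eval t = 0 := by
  intro k
  induction k with
  | zero =>
    intro j hk hj
    obtain ⟨j, rfl⟩ : ∃ j', j = j' + 1 := ⟨j - 1, by omega⟩
    simp only [pow_zero, one_mul, Function.iterate_succ_apply']
    rw [poly_ftc]
    rw [eval_iter_deriv_zero n j (by omega) 1 (by norm_num),
      eval_iter_deriv_zero n j (by omega) (-1) (by norm_num), sub_zero]
  | succ k ih =>
    intro j hk hj
    obtain ⟨j, rfl⟩ : ∃ j', j = j' + 1 := ⟨j - 1, by omega⟩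
    set g := (X ^ 2 - 1 : Polynomial ℝ) ^ n
    have key : derivative (X ^ (k+1) * derivative^[j] g)
        = C ((k + 1 : ℕ) : ℝ) * (X ^ k * derivative^[j] g) + X ^ (k+1) * derivative^[j+1] g := by
      rw [Function.iterate_succ_apply', derivative_mul, derivative_X_pow]
      push_cast
      ring
    have h2 := poly_ftc (X ^ (k+1) * derivative^[j] g) (-1) 1
    rw [key] at h2
    have e1 : (X ^ (k+1) * derivative^[j] g).eval 1 = 0 := by
      simp [eval_iter_deriv_zero n j (by omega) 1 (by norm_num)]
      exact eval_iter_deriv_zero n j (by omega) 1 (by norm_num)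
    have e2 : (X ^ (k+1) * derivative^[j] g).eval (-1) = 0 := by
      simp [eval_iter_deriv_zero n j (by omega) (-1) (by norm_num)]
      exact eval_iter_deriv_zero n j (by omega) (-1) (by norm_num)
    rw [e1, e2, sub_zero] at h2
    set A := C ((k + 1 : ℕ) : ℝ) * (X ^ k * derivative^[j] g) with hA
    set B := X ^ (k+1) * derivative^[j+1] g with hB
    have split : (∫ t in (-1:ℝ)..1, (A + B).eval t)
        = (∫ t in (-1:ℝ)..1, A.eval t) + ∫ t in (-1:ℝ)..1, B.eval t := by
      simp only [eval_add]
      exact intervalIntegral.integral_add (poly_intble A _ _) (poly_intble B _ _)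
    rw [split] at h2
    have hA2 : (∫ t in (-1:ℝ)..1, A.eval t)
        = ((k + 1 : ℕ) : ℝ) * ∫ t in (-1:ℝ)..1, (X ^ k * derivative^[j] g).eval t := by
      simp only [hA, eval_mul, eval_C]
      rw [intervalIntegral.integral_const_mul]
    have hih : (∫ t in (-1:ℝ)..1, (X ^ k * derivative^[j] g).eval t) = 0 := by
      have := ih j (by omega) (by omega)
      simpa using this
    rw [hA2, hih, mul_zero, zero_add] at h2
    simpa [hB] using h2


lemma log_eq_integral {x : ℝ} (hx : 2 ≤ x) :
    Real.log ((x + 1) / (x - 1)) = ∫ t in (-1:ℝ)..1, (x - t)⁻¹ := by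
  rw [intervalIntegral.integral_comp_sub_left (fun u => u⁻¹) x]
  rw [integral_inv (by
    rw [Set.uIcc_of_le (by linarith)]
    intro h
    simp only [Set.mem_Icc] at h
    linarith [h.1])]
  ring_nf


noncomputable def c0 : ℕ → ℝ := fun j => ∫ t in (-1:ℝ)..1, t ^ j


open Polynomial in
/-- Chebyshev's theorem, proved by Hermite in his letter of May 31, 1885, in the
form of the Padé approximation property of the Legendre polynomial
`P = (1/(2^n n!)) Dⁿ((X²-1)ⁿ)`: there are a polynomial `Q` of degree `< n` and a
constant `C ≥ 0` with `|P(x)·½ log((x+1)/(x-1)) - Q(x)| ≤ C/x^(n+1)` for `x ≥ 2`. -/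
theorem legendre_pade_log (n : ℕ)
    (P : Polynomial ℝ)
    (hP : P = Polynomial.C (1 / (2 ^ n * (Nat.factorial n : ℝ))) *
      (Polynomial.derivative^[n] ((Polynomial.X ^ 2 - 1) ^ n))) :
    ∃ Q : Polynomial ℝ, Q.degree < n ∧ ∃ C : ℝ, 0 ≤ C ∧
      ∀ x : ℝ, 2 ≤ x →
        |P.eval x * ((1 / 2) * Real.log ((x + 1) / (x - 1))) - Q.eval x| ≤
          C / x ^ (n + 1) := by
  set g : Polynomial ℝ := (X ^ 2 - 1) ^ n with hg
  -- degree bound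
  have hdeg : P.natDegree ≤ n := by
    rw [hP]
    refine le_trans (natDegree_mul_le) ?_
    simp only [natDegree_C, zero_add]
    refine le_trans (natDegree_iterate_derivative _ _) ?_
    have : g.natDegree ≤ 2 * n := by
      refine le_trans (natDegree_pow_le) ?_
      have : (X ^ 2 - 1 : Polynomial ℝ).natDegree ≤ 2 := by
        refine le_trans (natDegree_sub_le _ _) ?_
        simp
      have h2 : n * (X ^ 2 - 1 : Polynomial ℝ).natDegree ≤ n * 2 := Nat.mul_le_mul_left n this
      omega
    omega
  have hdeg' : P.natDegree < n + 1 := Nat.lt_succ_of_le hdeg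
  set Q : Polynomial ℝ := C (1/2) * ∑ m ∈ Finset.range (n+1), C (P.coeff m) *
      ∑ i ∈ Finset.range m, C (c0 (m-1-i)) * X ^ i with hQ
  have hQdeg : Q.degree < n := by
    rw [Polynomial.degree_lt_iff_coeff_zero]
    intro k hk
    have hk' : n ≤ k := by exact_mod_cast hk
    rw [hQ, coeff_C_mul, Polynomial.finset_sum_coeff]
    rw [Finset.sum_eq_zero, mul_zero]
    intro m hm
    rw [coeff_C_mul, Polynomial.finset_sum_coeff]
    rw [Finset.sum_eq_zero, mul_zero]
    intro i hi
    simp only [Finset.mem_range] at hm hi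
    rw [coeff_C_mul, coeff_X_pow, if_neg (by omega), mul_zero]
  refine ⟨Q, hQdeg, ?_⟩
  -- bound on [-1,1]
  obtain ⟨M, hM⟩ : ∃ M : ℝ, ∀ t ∈ Set.Icc (-1:ℝ) 1, |P.eval t * t ^ n| ≤ M := by
    obtain ⟨M, hM⟩ := (isCompact_Icc (a := (-1:ℝ)) (b := 1)).exists_bound_of_continuousOn
      (f := fun t => P.eval t * t ^ n) ((P.continuous.mul (continuous_pow n)).continuousOn)
    exact ⟨M, fun t ht => hM t ht⟩
  have hM0 : 0 ≤ M := le_trans (abs_nonneg _) (hM 0 (by norm_num))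
  refine ⟨2 * M, by linarith, ?_⟩
  intro x hx
  have hx0 : (0:ℝ) < x := by linarith
  have hxn : (0:ℝ) < x ^ n := pow_pos hx0 n
  have hicc : Set.uIcc (-1:ℝ) 1 = Set.Icc (-1) 1 := Set.uIcc_of_le (by norm_num)
  have hne : ∀ t ∈ Set.uIcc (-1:ℝ) 1, x - t ≠ 0 := by
    intro t ht
    rw [hicc, Set.mem_Icc] at ht
    intro h; nlinarith [ht.2]
  set F : ℝ → ℝ := fun t => ∑ m ∈ Finset.range (n+1), P.coeff m *
      ∑ i ∈ Finset.range m, t ^ (m-1-i) * x ^ i with hF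
  -- Q.eval x as a sum
  have hQx : Q.eval x = (1/2) * ∑ m ∈ Finset.range (n+1), P.coeff m *
      ∑ i ∈ Finset.range m, c0 (m-1-i) * x ^ i := by
    simp [hQ, eval_finset_sum]
  -- integral of F
  have hFint : (∫ t in (-1:ℝ)..1, F t) = ∑ m ∈ Finset.range (n+1), P.coeff m *
      ∑ i ∈ Finset.range m, c0 (m-1-i) * x ^ i := by
    rw [hF, intervalIntegral.integral_finset_sum]
    · refine Finset.sum_congr rfl (fun m _ => ?_)
      rw [intervalIntegral.integral_const_mul]
      congr 1
      rw [intervalIntegral.integral_finset_sum]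
      · refine Finset.sum_congr rfl (fun i _ => ?_)
        rw [intervalIntegral.integral_mul_const]
        rfl
      · intro i _
        exact ((continuous_pow _).mul continuous_const).intervalIntegrable _ _
    · intro m _
      refine Continuous.intervalIntegrable ?_ _ _
      exact continuous_const.mul (continuous_finset_sum _
        (fun i _ => (continuous_pow _).mul continuous_const))
  -- pointwise: P(x)/(x-t) - F t = P(t)/(x-t)
  have hPF : ∀ t ∈ Set.uIcc (-1:ℝ) 1,
      P.eval x * (x - t)⁻¹ - F t = P.eval t * (x - t)⁻¹ := by
    intro t ht
    have hnet := hne t ht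
    have hsub : F t * (x - t) = P.eval x - P.eval t := by
      rw [hF, Finset.sum_mul]
      have : ∀ m ∈ Finset.range (n+1),
          P.coeff m * (∑ i ∈ Finset.range m, t ^ (m-1-i) * x ^ i) * (x - t)
            = P.coeff m * x ^ m - P.coeff m * t ^ m := by
        intro m _
        have hgs := geom_sum₂_mul x t m
        have : (∑ i ∈ Finset.range m, t ^ (m-1-i) * x ^ i)
            = ∑ i ∈ Finset.range m, x ^ i * t ^ (m-1-i) := by
          refine Finset.sum_congr rfl (fun i _ => mul_comm _ _)
        rw [this, mul_assoc, hgs]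
        ring
      rw [Finset.sum_congr rfl this, Finset.sum_sub_distrib,
        Polynomial.eval_eq_sum_range' hdeg' x, Polynomial.eval_eq_sum_range' hdeg' t]
    field_simp
    linear_combination (-1 : ℝ) * hsub
  -- pointwise split of the Cauchy kernel
  have hsplit : ∀ t ∈ Set.uIcc (-1:ℝ) 1, P.eval t * (x - t)⁻¹
      = (∑ i ∈ Finset.range n, (P.eval t * t ^ (n-1-i)) * (x ^ i / x ^ n))
        + P.eval t * t ^ n / (x ^ n * (x - t)) := by
    intro t ht
    have hnet := hne t ht
    have hgs := geom_sum₂_mul x t n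
    have hsum : (∑ i ∈ Finset.range n, (P.eval t * t ^ (n-1-i)) * (x ^ i / x ^ n))
        = P.eval t * (∑ i ∈ Finset.range n, x ^ i * t ^ (n-1-i)) / x ^ n := by
      rw [eq_div_iff hxn.ne', Finset.sum_mul, Finset.mul_sum]
      refine Finset.sum_congr rfl (fun i _ => ?_)
      field_simp
    have hS : (∑ i ∈ Finset.range n, x ^ i * t ^ (n-1-i)) = (x ^ n - t ^ n) / (x - t) := by
      rw [eq_div_iff hnet]; exact hgs
    rw [hsum, hS]
    field_simp
    ring
  -- integrability
  have hI1 : IntervalIntegrable (fun t => (x - t)⁻¹) MeasureTheory.volume (-1) 1 := by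
    apply ContinuousOn.intervalIntegrable
    exact ((continuous_const.sub continuous_id).continuousOn).inv₀ hne
  have hI2 : IntervalIntegrable F MeasureTheory.volume (-1) 1 := by
    refine Continuous.intervalIntegrable ?_ _ _
    exact continuous_finset_sum _ (fun m _ => continuous_const.mul
      (continuous_finset_sum _ (fun i _ => (continuous_pow _).mul continuous_const)))
  have hI3 : IntervalIntegrable (fun t => P.eval t * (x - t)⁻¹) MeasureTheory.volume (-1) 1 := by
    apply ContinuousOn.intervalIntegrable
    exact (P.continuous.continuousOn).mul
      (((continuous_const.sub continuous_id).continuousOn).inv₀ hne)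
  have hI4 : IntervalIntegrable (fun t => P.eval t * t ^ n / (x ^ n * (x - t)))
      MeasureTheory.volume (-1) 1 := by
    apply ContinuousOn.intervalIntegrable
    refine ((P.continuous.mul (continuous_pow n)).continuousOn).div
      ((continuous_const.mul (continuous_const.sub continuous_id)).continuousOn) ?_
    intro t ht
    exact mul_ne_zero hxn.ne' (hne t ht)
  have hI5 : IntervalIntegrable (fun t => ∑ i ∈ Finset.range n,
      (P.eval t * t ^ (n-1-i)) * (x ^ i / x ^ n)) MeasureTheory.volume (-1) 1 := by
    refine Continuous.intervalIntegrable ?_ _ _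
    exact continuous_finset_sum _ (fun i _ =>
      (P.continuous.mul (continuous_pow _)).mul continuous_const)
  -- orthogonality applied to P
  have horth : ∀ i ∈ Finset.range n, (∫ t in (-1:ℝ)..1, P.eval t * t ^ (n-1-i)) = 0 := by
    intro i hi
    simp only [Finset.mem_range] at hi
    have h1 : (fun t : ℝ => P.eval t * t ^ (n-1-i))
        = fun t : ℝ => (1 / (2 ^ n * (Nat.factorial n : ℝ))) *
            (t ^ (n-1-i) * (derivative^[n] g).eval t) := by
      funext t
      rw [hP]
      simp only [eval_mul, eval_C]
      ring
    rw [h1, intervalIntegral.integral_const_mul, ortho n (n-1-i) n (by omega) le_rfl, mul_zero]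
  -- main identity
  have key : P.eval x * ((1 / 2) * Real.log ((x + 1) / (x - 1))) - Q.eval x
      = (1/2) * ∫ t in (-1:ℝ)..1, P.eval t * t ^ n / (x ^ n * (x - t)) := by
    rw [log_eq_integral hx, hQx, ← hFint]
    rw [show P.eval x * ((1/2) * ∫ t in (-1:ℝ)..1, (x - t)⁻¹)
        = (1/2) * ∫ t in (-1:ℝ)..1, P.eval x * (x - t)⁻¹ by
      rw [intervalIntegral.integral_const_mul]; ring]
    rw [← mul_sub, ← intervalIntegral.integral_sub (hI1.const_mul _) hI2]
    rw [intervalIntegral.integral_congr hPF, intervalIntegral.integral_congr hsplit]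
    rw [intervalIntegral.integral_add hI5 hI4, intervalIntegral.integral_finset_sum
      (f := fun i t => (P.eval t * t ^ (n-1-i)) * (x ^ i / x ^ n)) (fun i _ => ((P.continuous.mul (continuous_pow _)).mul continuous_const).intervalIntegrable _ _)]
    have : ∀ i ∈ Finset.range n, (∫ t in (-1:ℝ)..1,
        (P.eval t * t ^ (n-1-i)) * (x ^ i / x ^ n)) = 0 := by
      intro i hi
      rw [intervalIntegral.integral_mul_const, horth i hi, zero_mul]
    rw [Finset.sum_congr rfl this, Finset.sum_const_zero, zero_add]
  rw [key]
  -- the bound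
  have hb : ∀ t ∈ Set.uIoc (-1:ℝ) 1, ‖P.eval t * t ^ n / (x ^ n * (x - t))‖
      ≤ M / (x ^ n * (x - 1)) := by
    intro t ht
    have ht' : t ∈ Set.Icc (-1:ℝ) 1 := by
      rw [← hicc]; exact Set.uIoc_subset_uIcc ht
    rw [Set.mem_Icc] at ht'
    have hden : (0:ℝ) < x ^ n * (x - 1) := by
      apply mul_pos hxn; linarith
    have hden2 : x ^ n * (x - 1) ≤ |x ^ n * (x - t)| := by
      rw [abs_of_pos (by apply mul_pos hxn; linarith [ht'.2])]
      have : x - 1 ≤ x - t := by linarith [ht'.2]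
      exact mul_le_mul_of_nonneg_left this hxn.le
    rw [Real.norm_eq_abs, abs_div]
    exact div_le_div₀ hM0 (hM t ht') hden hden2
  have hbound := intervalIntegral.norm_integral_le_of_norm_le_const hb
  rw [Real.norm_eq_abs] at hbound
  have h2 : |(1:ℝ) - (-1)| = 2 := by norm_num
  rw [h2] at hbound
  rw [abs_mul, abs_of_pos (by norm_num : (0:ℝ) < 1/2)]
  have hle : (1/2 : ℝ) * |∫ t in (-1:ℝ)..1, P.eval t * t ^ n / (x ^ n * (x - t))|
      ≤ M / (x ^ n * (x - 1)) := by nlinarith [abs_nonneg (∫ t in (-1:ℝ)..1, P.eval t * t ^ n / (x ^ n * (x - t)))]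
  refine hle.trans ?_
  rw [div_le_div_iff₀ (mul_pos hxn (by linarith)) (by positivity), pow_succ]
  nlinarith [mul_nonneg (mul_nonneg hM0 hxn.le) (by linarith : (0:ℝ) ≤ x - 2)]
end

section
/- Let a ≤ b be real numbers and let φ, ψ : ℝ → ℝ be continuous functions. Then (∫_a^b φ(x)² dx)·(∫_a^b ψ(x)² dx) − (∫_a^b φ(x)·ψ(x) dx)² = ∫_a^b ( ∫_x^b (φ(x)·ψ(y) − φ(y)·ψ(x))² dy ) dx. -/
private lemma hasDerivAt_integral_left {f : ℝ → ℝ} (hf : Continuous f) (b x : ℝ) :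
    HasDerivAt (fun u => ∫ t in u..b, f t) (-f x) x := by
  have h := intervalIntegral.integral_hasDerivAt_right (hf.intervalIntegrable b x)
    (hf.stronglyMeasurable.stronglyMeasurableAtFilter) hf.continuousAt
  have h2 := h.neg
  have : (fun u => -∫ t in b..u, f t) = fun u => ∫ t in u..b, f t := by
    funext u; rw [intervalIntegral.integral_symm, neg_neg]
  rw [← this]; exact h2

/-- Gomes Teixeira's integral identity (Hermite's letter of November 16, 1888). -/
theorem teixeira_integral_identity (a b : ℝ) (hab : a ≤ b) (φ ψ : ℝ → ℝ)
    (hφ : Continuous φ) (hψ : Continuous ψ) :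
    (∫ x in a..b, φ x ^ 2) * (∫ x in a..b, ψ x ^ 2) -
        (∫ x in a..b, φ x * ψ x) ^ 2 =
      ∫ x in a..b, ∫ y in x..b, (φ x * ψ y - φ y * ψ x) ^ 2 := by
  have hφ2 : Continuous fun t => φ t ^ 2 := hφ.pow 2
  have hψ2 : Continuous fun t => ψ t ^ 2 := hψ.pow 2
  have hφψ : Continuous fun t => φ t * ψ t := hφ.mul hψ
  set R : ℝ → ℝ := fun x => ∫ t in x..b, φ t ^ 2 with hRdef
  set S : ℝ → ℝ := fun x => ∫ t in x..b, ψ t ^ 2 with hSdef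
  set T : ℝ → ℝ := fun x => ∫ t in x..b, φ t * ψ t with hTdef
  have hR : ∀ x, HasDerivAt R (-(φ x ^ 2)) x := fun x => hasDerivAt_integral_left hφ2 b x
  have hS : ∀ x, HasDerivAt S (-(ψ x ^ 2)) x := fun x => hasDerivAt_integral_left hψ2 b x
  have hT : ∀ x, HasDerivAt T (-(φ x * ψ x)) x := fun x => hasDerivAt_integral_left hφψ b x
  have hRc : Continuous R := by
    rw [continuous_iff_continuousAt]; exact fun x => (hR x).continuousAt
  have hSc : Continuous S := by
    rw [continuous_iff_continuousAt]; exact fun x => (hS x).continuousAt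
  have hTc : Continuous T := by
    rw [continuous_iff_continuousAt]; exact fun x => (hT x).continuousAt
  -- G = R*S - T^2
  have hG : ∀ x ∈ Set.uIcc a b, HasDerivAt (fun x => R x * S x - T x ^ 2)
      (-(φ x ^ 2 * S x + ψ x ^ 2 * R x - 2 * (φ x * ψ x) * T x)) x := by
    intro x _
    have h := ((hR x).mul (hS x)).sub ((hT x).pow 2)
    refine h.congr_deriv ?_
    norm_num
    ring
  have hcont : Continuous fun x => -(φ x ^ 2 * S x + ψ x ^ 2 * R x - 2 * (φ x * ψ x) * T x) := by
    continuity
  have key := intervalIntegral.integral_eq_sub_of_hasDerivAt (f := fun x => R x * S x - T x ^ 2) hG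
    (hcont.intervalIntegrable a b)
  have hRb : R b = 0 := by simp [hRdef]
  have hSb : S b = 0 := by simp [hSdef]
  have hTb : T b = 0 := by simp [hTdef]
  simp only [hRb, hSb, hTb] at key
  -- key : ∫ x in a..b, -(...) = 0*0 - 0^2 - (R a * S a - T a ^ 2)
  have key2 : R a * S a - T a ^ 2
      = ∫ x in a..b, (φ x ^ 2 * S x + ψ x ^ 2 * R x - 2 * (φ x * ψ x) * T x) := by
    rw [intervalIntegral.integral_neg] at key
    linarith [key]
  -- inner integral expansion
  have inner : ∀ x, (∫ y in x..b, (φ x * ψ y - φ y * ψ x) ^ 2)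
      = φ x ^ 2 * S x + ψ x ^ 2 * R x - 2 * (φ x * ψ x) * T x := by
    intro x
    have e1 : ∀ y, (φ x * ψ y - φ y * ψ x) ^ 2
        = φ x ^ 2 * ψ y ^ 2 + ψ x ^ 2 * φ y ^ 2 - 2 * (φ x * ψ x) * (φ y * ψ y) := by
      intro y; ring
    rw [intervalIntegral.integral_congr (g := fun y =>
      φ x ^ 2 * ψ y ^ 2 + ψ x ^ 2 * φ y ^ 2 - 2 * (φ x * ψ x) * (φ y * ψ y))
      (fun y _ => e1 y)]
    rw [intervalIntegral.integral_sub (((hψ2.intervalIntegrable x b).const_mul _).add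
      ((hφ2.intervalIntegrable x b).const_mul _)) ((hφψ.intervalIntegrable x b).const_mul _),
      intervalIntegral.integral_add ((hψ2.intervalIntegrable x b).const_mul _)
      ((hφ2.intervalIntegrable x b).const_mul _),
      intervalIntegral.integral_const_mul, intervalIntegral.integral_const_mul,
      intervalIntegral.integral_const_mul]
  have outer : (∫ x in a..b, ∫ y in x..b, (φ x * ψ y - φ y * ψ x) ^ 2)
      = ∫ x in a..b, (φ x ^ 2 * S x + ψ x ^ 2 * R x - 2 * (φ x * ψ x) * T x) :=
    intervalIntegral.integral_congr (fun x _ => inner x)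
  show R a * S a - T a ^ 2 = _
  rw [outer, key2]
end

section
/- Let a ≤ b be real numbers and let φ, φ₁, ψ, ψ₁ : ℝ → ℝ be continuous functions. Then (∫_a^b φ(x)·φ₁(x) dx)·(∫_a^b ψ(x)·ψ₁(x) dx) − (∫_a^b φ(x)·ψ₁(x) dx)·(∫_a^b φ₁(x)·ψ(x) dx) = ∫_a^b ( ∫_x^b (φ(x)·ψ(y) − φ(y)·ψ(x))·(φ₁(x)·ψ₁(y) − φ₁(y)·ψ₁(x)) dy ) dx. -/
open MeasureTheory Set intervalIntegral


lemma triangle_swap' (a b : ℝ) (hab : a ≤ b) (F : ℝ → ℝ → ℝ)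
    (hF : Continuous fun p : ℝ × ℝ => F p.1 p.2) :
    ∫ x in a..b, ∫ y in a..x, F x y = ∫ y in a..b, ∫ x in y..b, F x y := by
  set μ := volume.restrict (Set.Ioc a b) with hμ
  set H : ℝ × ℝ → ℝ := fun p => if p.2 ≤ p.1 then F p.1 p.2 else 0 with hH
  have hHmeas : Measurable H := by
    exact Measurable.ite (isClosed_le continuous_snd continuous_fst).measurableSet
      hF.measurable measurable_const
  obtain ⟨C, hC⟩ := (isCompact_Icc.prod isCompact_Icc).exists_bound_of_continuousOn
    (hF.continuousOn (s := Set.Icc a b ×ˢ Set.Icc a b))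
  have hint : Integrable H (μ.prod μ) := by
    refine Integrable.mono' (integrable_const (max C 0)) hHmeas.aestronglyMeasurable ?_
    rw [hμ, Measure.prod_restrict]
    filter_upwards [ae_restrict_mem ((measurableSet_Ioc).prod (measurableSet_Ioc))] with p hp
    rcases hp with ⟨hp1, hp2⟩
    show ‖if p.2 ≤ p.1 then F p.1 p.2 else 0‖ ≤ max C 0
    by_cases h : p.2 ≤ p.1
    · rw [if_pos h]
      exact le_trans (hC p ⟨Ioc_subset_Icc_self hp1, Ioc_subset_Icc_self hp2⟩) (le_max_left _ _)
    · rw [if_neg h]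
      simpa using le_max_right C 0
  have key := integral_integral_swap (f := fun x y => H (x, y)) hint
  have lhs_eq : ∫ x in a..b, ∫ y in a..x, F x y = ∫ x, ∫ y, H (x, y) ∂μ ∂μ := by
    rw [intervalIntegral.integral_of_le hab]
    refine setIntegral_congr_fun measurableSet_Ioc fun x hx => ?_
    have hx1 : a ≤ x := le_of_lt hx.1
    rw [intervalIntegral.integral_of_le hx1, hμ]
    have : ∀ y, H (x, y) = Set.indicator (Set.Iic x) (fun y => F x y) y := by
      intro y
      by_cases h : y ≤ x
      · simp [hH, h, Set.indicator_of_mem (Set.mem_Iic.mpr h)]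
      · simp [hH, h, Set.indicator_of_notMem (fun hy => h hy)]
    simp_rw [this]
    rw [setIntegral_indicator measurableSet_Iic, Set.Ioc_inter_Iic,
      min_eq_right hx.2]
  have rhs_eq : ∫ y in a..b, ∫ x in y..b, F x y = ∫ y, ∫ x, H (x, y) ∂μ ∂μ := by
    rw [intervalIntegral.integral_of_le hab]
    refine setIntegral_congr_fun measurableSet_Ioc fun y hy => ?_
    rw [intervalIntegral.integral_of_le hy.2, hμ]
    have : ∀ x, H (x, y) = Set.indicator (Set.Ici y) (fun x => F x y) x := by
      intro x
      by_cases h : y ≤ x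
      · simp [hH, h, Set.indicator_of_mem (Set.mem_Ici.mpr h)]
      · simp [hH, h, Set.indicator_of_notMem (fun hx => h hx)]
    simp_rw [this]
    rw [setIntegral_indicator measurableSet_Ici]
    have hset : Set.Ioc a b ∩ Set.Ici y = Set.Icc y b := by
      ext x
      simp only [Set.mem_inter_iff, Set.mem_Ioc, Set.mem_Ici, Set.mem_Icc]
      constructor
      · rintro ⟨⟨_, hxb⟩, hyx⟩; exact ⟨hyx, hxb⟩
      · rintro ⟨hyx, hxb⟩; exact ⟨⟨lt_of_lt_of_le hy.1 hyx, hxb⟩, hyx⟩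
    rw [hset, integral_Icc_eq_integral_Ioc]
  rw [lhs_eq, rhs_eq]
  exact key

/-- The "forme un peu plus générale" of Teixeira's integral identity
(Hermite's letter of November 16, 1888). -/
theorem teixeira_integral_identity_general (a b : ℝ) (hab : a ≤ b)
    (φ φ₁ ψ ψ₁ : ℝ → ℝ)
    (hφ : Continuous φ) (hφ₁ : Continuous φ₁)
    (hψ : Continuous ψ) (hψ₁ : Continuous ψ₁) :
    (∫ x in a..b, φ x * φ₁ x) * (∫ x in a..b, ψ x * ψ₁ x) -
        (∫ x in a..b, φ x * ψ₁ x) * (∫ x in a..b, φ₁ x * ψ x) =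
      ∫ x in a..b, ∫ y in x..b,
        (φ x * ψ y - φ y * ψ x) * (φ₁ x * ψ₁ y - φ₁ y * ψ₁ x) := by
  set F : ℝ → ℝ → ℝ :=
    fun x y => (φ x * ψ y - φ y * ψ x) * (φ₁ x * ψ₁ y - φ₁ y * ψ₁ x) with hF
  set A := ∫ x in a..b, φ x * φ₁ x with hA
  set B := ∫ x in a..b, ψ x * ψ₁ x with hB
  set C := ∫ x in a..b, φ x * ψ₁ x with hC
  set D := ∫ x in a..b, φ₁ x * ψ x with hD
  have hFc : Continuous (Function.uncurry F) := by
    rw [hF]; fun_prop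
  have hFx : ∀ x, Continuous fun y => F x y := by
    intro x
    exact hFc.comp (Continuous.prodMk_right x)
  have hsymm : ∀ x y, F y x = F x y := fun x y => by rw [hF]; ring
  have hsplit : ∀ x, (∫ y in a..x, F x y) + (∫ y in x..b, F x y) = ∫ y in a..b, F x y :=
    fun x => intervalIntegral.integral_add_adjacent_intervals
      ((hFx x).intervalIntegrable _ _) ((hFx x).intervalIntegrable _ _)
  have hcont1 : Continuous fun x => ∫ y in a..x, F x y :=
    continuous_parametric_intervalIntegral_of_continuous hFc continuous_id
  have hcontab : Continuous fun x => ∫ y in a..b, F x y :=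
    continuous_parametric_intervalIntegral_of_continuous' hFc a b
  have hcont2 : Continuous fun x => ∫ y in x..b, F x y := by
    have heq : (fun x => ∫ y in x..b, F x y)
        = fun x => (∫ y in a..b, F x y) - ∫ y in a..x, F x y :=
      funext fun x => by rw [← hsplit x]; ring
    rw [heq]
    exact hcontab.sub hcont1
  have hL_T : (∫ x in a..b, ∫ y in a..x, F x y) = ∫ x in a..b, ∫ y in x..b, F x y := by
    rw [triangle_swap' a b hab F hFc]
    exact intervalIntegral.integral_congr fun u _ =>
      intervalIntegral.integral_congr fun v _ => hsymm u v
  have hsum : (∫ x in a..b, ∫ y in a..b, F x y)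
      = 2 * ∫ x in a..b, ∫ y in x..b, F x y := by
    calc ∫ x in a..b, ∫ y in a..b, F x y
        = ∫ x in a..b, ((∫ y in a..x, F x y) + ∫ y in x..b, F x y) :=
          intervalIntegral.integral_congr fun x _ => (hsplit x).symm
      _ = (∫ x in a..b, ∫ y in a..x, F x y) + ∫ x in a..b, ∫ y in x..b, F x y :=
          intervalIntegral.integral_add (hcont1.intervalIntegrable a b)
            (hcont2.intervalIntegrable a b)
      _ = 2 * ∫ x in a..b, ∫ y in x..b, F x y := by rw [hL_T]; ring
  have hinner : ∀ x, (∫ y in a..b, F x y)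
      = φ x * φ₁ x * B + ψ x * ψ₁ x * A - (φ x * ψ₁ x * D + φ₁ x * ψ x * C) := by
    intro x
    have hexp : ∀ y, F x y = (φ x * φ₁ x) * (ψ y * ψ₁ y) + (ψ x * ψ₁ x) * (φ y * φ₁ y)
        - ((φ x * ψ₁ x) * (φ₁ y * ψ y) + (φ₁ x * ψ x) * (φ y * ψ₁ y)) :=
      fun y => by rw [hF]; ring
    simp only [hexp]
    rw [intervalIntegral.integral_sub (f := fun y => φ x * φ₁ x * (ψ y * ψ₁ y) + ψ x * ψ₁ x * (φ y * φ₁ y)) (g := fun y => φ x * ψ₁ x * (φ₁ y * ψ y) + φ₁ x * ψ x * (φ y * ψ₁ y))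
        (((continuous_const.mul (hψ.mul hψ₁)).add
          (continuous_const.mul (hφ.mul hφ₁))).intervalIntegrable a b)
        (((continuous_const.mul (hφ₁.mul hψ)).add
          (continuous_const.mul (hφ.mul hψ₁))).intervalIntegrable a b),
      intervalIntegral.integral_add (f := fun y => φ x * φ₁ x * (ψ y * ψ₁ y)) (g := fun y => ψ x * ψ₁ x * (φ y * φ₁ y))
        ((continuous_const.mul (hψ.mul hψ₁)).intervalIntegrable a b)
        ((continuous_const.mul (hφ.mul hφ₁)).intervalIntegrable a b),
      intervalIntegral.integral_add (f := fun y => φ x * ψ₁ x * (φ₁ y * ψ y)) (g := fun y => φ₁ x * ψ x * (φ y * ψ₁ y))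
        ((continuous_const.mul (hφ₁.mul hψ)).intervalIntegrable a b)
        ((continuous_const.mul (hφ.mul hψ₁)).intervalIntegrable a b),
      intervalIntegral.integral_const_mul, intervalIntegral.integral_const_mul,
      intervalIntegral.integral_const_mul, intervalIntegral.integral_const_mul,
      ← hA, ← hB, ← hC, ← hD]
  have houter : (∫ x in a..b, ∫ y in a..b, F x y) = A * B + B * A - (C * D + D * C) := by
    simp only [hinner]
    rw [intervalIntegral.integral_sub (f := fun x => φ x * φ₁ x * B + ψ x * ψ₁ x * A) (g := fun x => φ x * ψ₁ x * D + φ₁ x * ψ x * C)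
        ((((hφ.mul hφ₁).mul continuous_const).add
          ((hψ.mul hψ₁).mul continuous_const)).intervalIntegrable a b)
        ((((hφ.mul hψ₁).mul continuous_const).add
          ((hφ₁.mul hψ).mul continuous_const)).intervalIntegrable a b),
      intervalIntegral.integral_add (f := fun x => φ x * φ₁ x * B) (g := fun x => ψ x * ψ₁ x * A)
        (((hφ.mul hφ₁).mul continuous_const).intervalIntegrable a b)
        (((hψ.mul hψ₁).mul continuous_const).intervalIntegrable a b),
      intervalIntegral.integral_add (f := fun x => φ x * ψ₁ x * D) (g := fun x => φ₁ x * ψ x * C)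
        (((hφ.mul hψ₁).mul continuous_const).intervalIntegrable a b)
        (((hφ₁.mul hψ).mul continuous_const).intervalIntegrable a b),
      intervalIntegral.integral_mul_const, intervalIntegral.integral_mul_const,
      intervalIntegral.integral_mul_const, intervalIntegral.integral_mul_const,
      ← hA, ← hB, ← hC, ← hD]
  show A * B - C * D = ∫ x in a..b, ∫ y in x..b, F x y
  linarith [hsum, houter]
end

section
/- Let a < b be real numbers and let φ, ψ : ℝ → ℝ be continuous functions. If there exist points x, y in the closed interval [a,b] with φ(x)·ψ(y) ≠ φ(y)·ψ(x), then (∫_a^b φ(x)·ψ(x) dx)² < (∫_a^b φ(x)² dx)·(∫_a^b ψ(x)² dx). -/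
open intervalIntegral

lemma teixeira_aux_eq_zero {a b : ℝ} (hab : a < b) {f : ℝ → ℝ} (hf : Continuous f)
    (hnn : ∀ x, 0 ≤ f x) (hint : ∫ x in a..b, f x = 0) :
    ∀ x ∈ Set.Icc a b, f x = 0 := by
  intro x hx
  by_contra hfx
  have hpos : 0 < ∫ x in a..b, f x :=
    intervalIntegral.integral_pos hab hf.continuousOn (fun y _ => hnn y)
      ⟨x, hx, lt_of_le_of_ne (hnn x) (Ne.symm hfx)⟩
  linarith

/-- Teixeira's strict Cauchy–Schwarz inequality (Hermite's letter of
November 22, 1888): if `φ(x)ψ(y) ≠ φ(y)ψ(x)` for some `x, y ∈ [a,b]`, then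
`(∫φψ)² < ∫φ² · ∫ψ²`. -/
theorem teixeira_strict_inequality (a b : ℝ) (hab : a < b) (φ ψ : ℝ → ℝ)
    (hφ : Continuous φ) (hψ : Continuous ψ)
    (h : ∃ x ∈ Set.Icc a b, ∃ y ∈ Set.Icc a b, φ x * ψ y ≠ φ y * ψ x) :
    (∫ x in a..b, φ x * ψ x) ^ 2 <
      (∫ x in a..b, φ x ^ 2) * (∫ x in a..b, ψ x ^ 2) := by
  obtain ⟨x, hx, y, hy, hxy⟩ := h
  set A := ∫ x in a..b, φ x ^ 2 with hA
  set B := ∫ x in a..b, ψ x ^ 2 with hB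
  set C := ∫ x in a..b, φ x * ψ x with hC
  by_cases hA0 : A = 0
  · exfalso
    have hz : ∀ z ∈ Set.Icc a b, φ z = 0 := by
      intro z hzz
      have := teixeira_aux_eq_zero hab (f := fun x => φ x ^ 2) (by continuity)
        (fun x => sq_nonneg _) hA0 z hzz
      exact pow_eq_zero_iff (n := 2) two_ne_zero |>.mp this
    apply hxy
    rw [hz x hx, hz y hy]
    ring
  · have hApos : 0 < A := by
      have : 0 ≤ A :=
        intervalIntegral.integral_nonneg hab.le (fun x _ => sq_nonneg _)
      exact lt_of_le_of_ne this (Ne.symm hA0)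
    set t := -C / A with ht
    have hiφ2 : IntervalIntegrable (fun x => φ x ^ 2) MeasureTheory.volume a b :=
      (by continuity : Continuous fun x => φ x ^ 2).intervalIntegrable a b
    have hiψ2 : IntervalIntegrable (fun x => ψ x ^ 2) MeasureTheory.volume a b :=
      (by continuity : Continuous fun x => ψ x ^ 2).intervalIntegrable a b
    have hiφψ : IntervalIntegrable (fun x => φ x * ψ x) MeasureTheory.volume a b :=
      (hφ.mul hψ).intervalIntegrable a b
    have hE : (∫ z in a..b, (t * φ z + ψ z) ^ 2) = t ^ 2 * A + 2 * t * C + B := by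
      have : ∀ z : ℝ, (t * φ z + ψ z) ^ 2
          = t ^ 2 * φ z ^ 2 + 2 * t * (φ z * ψ z) + ψ z ^ 2 := fun z => by ring
      simp_rw [this]
      rw [intervalIntegral.integral_add (((hiφ2.const_mul _).add (hiφψ.const_mul _))) hiψ2,
        intervalIntegral.integral_add (hiφ2.const_mul _) (hiφψ.const_mul _),
        intervalIntegral.integral_const_mul, intervalIntegral.integral_const_mul]
    have hEnn : 0 ≤ t ^ 2 * A + 2 * t * C + B := by
      rw [← hE]
      exact intervalIntegral.integral_nonneg hab.le (fun z _ => sq_nonneg _)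
    have hEne : t ^ 2 * A + 2 * t * C + B ≠ 0 := by
      intro hE0
      have hz := teixeira_aux_eq_zero hab
        (f := fun z => (t * φ z + ψ z) ^ 2) (by continuity)
        (fun z => sq_nonneg _) (hE.trans hE0)
      have hzz : ∀ z ∈ Set.Icc a b, ψ z = -t * φ z := by
        intro z hzz
        have := pow_eq_zero_iff (n := 2) two_ne_zero |>.mp (hz z hzz)
        linarith
      apply hxy
      rw [hzz x hx, hzz y hy]
      ring
    have hEpos : 0 < t ^ 2 * A + 2 * t * C + B := lt_of_le_of_ne hEnn (Ne.symm hEne)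
    have key : t ^ 2 * A + 2 * t * C + B = (A * B - C ^ 2) / A := by
      rw [ht]
      field_simp
      ring
    rw [key] at hEpos
    have := (div_pos_iff.mp hEpos)
    rcases this with ⟨h1, _⟩ | ⟨_, h2⟩
    · linarith
    · linarith
end

section
/- For every complex number z with nonzero imaginary part, ∫_0^π cot(t − z) dt = i·π if Im(z) > 0, and ∫_0^π cot(t − z) dt = −i·π if Im(z) < 0, where the integral is taken over the real variable t ∈ [0, π]. -/
open Complex

lemma cotA (w : ℂ) (hs : Complex.sin w ≠ 0) (hq : (1:ℂ) - Complex.exp (-(2*I*w)) ≠ 0) :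
    Complex.cot w = I + (1 - Complex.exp (-(2*I*w)))⁻¹ * (2*I*Complex.exp (-(2*I*w))) := by
  have hq2 : Complex.exp (-(2*I*w)) = Complex.exp (-(w*I)) * Complex.exp (-(w*I)) := by
    rw [← Complex.exp_add]; ring_nf
  have huv : Complex.exp (w*I) * Complex.exp (-(w*I)) = 1 := by
    rw [← Complex.exp_add]; simp
  rw [Complex.cot_eq_cos_div_sin, Complex.sin, Complex.cos, hq2]
  rw [Complex.sin, neg_mul] at hs
  rw [hq2] at hq
  have hs' : Complex.exp (-(w*I)) - Complex.exp (w*I) ≠ 0 := by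
    intro h; exact hs (by rw [h]; simp)
  have hq' : (1:ℂ) - Complex.exp (-(w*I))^2 ≠ 0 := by rwa [sq]
  field_simp
  linear_combination (-(2:ℂ) * Complex.exp (-(w*I))) * huv -
    ((Complex.exp (-(w*I)) - Complex.exp (w*I)) * (1 + Complex.exp (-(w*I))^2)) * Complex.I_sq

lemma sin_ne_zero_of_im (w : ℂ) (h : w.im ≠ 0) : Complex.sin w ≠ 0 := by
  intro h0
  rw [Complex.sin_eq_zero_iff] at h0
  obtain ⟨k, rfl⟩ := h0
  simp at h

lemma hq_pos (w : ℂ) (h : w.im < 0) : 0 < ((1:ℂ) - Complex.exp (-(2*I*w))).re := by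
  have h1 : ‖Complex.exp (-(2*I*w))‖ < 1 := by
    rw [Complex.norm_exp]
    have : (-(2*I*w)).re = 2*w.im := by simp
    rw [this]
    exact Real.exp_lt_one_iff.mpr (by linarith)
  have h2 : (Complex.exp (-(2*I*w))).re < 1 :=
    lt_of_le_of_lt (Complex.re_le_norm _) h1
  simp only [Complex.sub_re, Complex.one_re]
  linarith

lemma hq_ne (w : ℂ) (h : w.im < 0) : (1:ℂ) - Complex.exp (-(2*I*w)) ≠ 0 := by
  intro h0
  have := hq_pos w h
  rw [h0] at this
  simp at this

lemma cot_neg' (x : ℂ) : Complex.cot (-x) = -Complex.cot x := by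
  simp [Complex.cot_eq_cos_div_sin, neg_div, div_neg]

lemma cot_continuous (z : ℂ) (hz : z.im ≠ 0) :
    Continuous fun t : ℝ => Complex.cot ((t:ℂ) - z) := by
  simp only [Complex.cot_eq_cos_div_sin]
  apply Continuous.div
  · fun_prop
  · fun_prop
  · intro t
    exact sin_ne_zero_of_im _ (by simpa using hz)

open Complex in
/-- Hermite's evaluation of `∫₀^π cot(x - a - ib) dx` (letter of March 1890):
the integral is `iπ` if `Im z > 0` and `-iπ` if `Im z < 0`. -/
theorem integral_cot_sub (z : ℂ) (hz : z.im ≠ 0) :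
    (0 < z.im → (∫ t in (0:ℝ)..Real.pi, Complex.cot ((t : ℂ) - z)) =
      Complex.I * Real.pi) ∧
    (z.im < 0 → (∫ t in (0:ℝ)..Real.pi, Complex.cot ((t : ℂ) - z)) =
      -(Complex.I * Real.pi)) := by
  have hint : IntervalIntegrable (fun t : ℝ => Complex.cot ((t:ℂ) - z))
      MeasureTheory.volume 0 Real.pi := (cot_continuous z hz).intervalIntegrable _ _
  constructor
  · intro h
    set F : ℝ → ℂ := fun s => I*(s:ℂ) + Complex.log (1 - Complex.exp (-(2*I*((s:ℂ) - z)))) with hF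
    have hderiv : ∀ t : ℝ, HasDerivAt F (Complex.cot ((t:ℂ) - z)) t := by
      intro t
      have him : ((t:ℂ) - z).im < 0 := by simp [h]
      have hs := sin_ne_zero_of_im _ (ne_of_lt him)
      have hpos := hq_pos _ him
      have hne := hq_ne _ him
      have hinner : HasDerivAt (fun s : ℂ => -(2*I*(s - z))) (-(2*I)) (t:ℂ) := by
        simpa using ((hasDerivAt_id ((t:ℂ))).sub_const z).const_mul (-(2*I))
      have hexp := hinner.cexp
      have hlog := (Complex.hasDerivAt_log (Or.inl hpos)).comp (t:ℂ) (hexp.const_sub 1)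
      have hlin : HasDerivAt (fun s : ℂ => I*s) I (t:ℂ) := by
        simpa using (hasDerivAt_id ((t:ℂ))).const_mul I
      have hsum := (hlin.add hlog).comp_ofReal
      convert hsum using 1
      · rfl
      rw [cotA _ hs hne]
      ring
    have heq := intervalIntegral.integral_eq_sub_of_hasDerivAt
      (f := F) (fun x _ => hderiv x) hint
    rw [heq]
    have hqeq : Complex.exp (-(2*I*(((Real.pi:ℝ):ℂ) - z)))
        = Complex.exp (-(2*I*(((0:ℝ):ℂ) - z))) := by
      rw [show -(2*I*(((Real.pi:ℝ):ℂ) - z))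
          = -(2*I*(((0:ℝ):ℂ) - z)) + (-(2*(Real.pi:ℂ)*I)) by push_cast; ring,
        Complex.exp_add]
      have h1 : Complex.exp (-(2*(Real.pi:ℂ)*I)) = 1 := by
        rw [Complex.exp_neg, Complex.exp_two_pi_mul_I, inv_one]
      rw [h1, mul_one]
    have e1 : F Real.pi = I*((Real.pi:ℝ):ℂ)
        + Complex.log (1 - Complex.exp (-(2*I*(((Real.pi:ℝ):ℂ) - z)))) := rfl
    have e0 : F 0 = Complex.log (1 - Complex.exp (-(2*I*(((0:ℝ):ℂ) - z)))) := by
      simp [hF]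
    rw [e1, e0, hqeq]
    ring
  · intro h
    set F : ℝ → ℂ := fun s => -(I*(s:ℂ)) + Complex.log (1 - Complex.exp (-(2*I*(z - (s:ℂ))))) with hF
    have hderiv : ∀ t : ℝ, HasDerivAt F (Complex.cot ((t:ℂ) - z)) t := by
      intro t
      have him : (z - (t:ℂ)).im < 0 := by simp [h]
      have hs := sin_ne_zero_of_im _ (ne_of_lt him)
      have hpos := hq_pos _ him
      have hne := hq_ne _ him
      have hinner : HasDerivAt (fun s : ℂ => -(2*I*(z - s))) (2*I) (t:ℂ) := by
        have h2 : (fun s : ℂ => -(2*I*(z - s))) = fun s : ℂ => 2*I*s - 2*I*z := by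
          funext s; ring
        rw [h2]
        simpa using ((hasDerivAt_id ((t:ℂ))).const_mul (2*I)).sub_const (2*I*z)
      have hexp := hinner.cexp
      have hlog := (Complex.hasDerivAt_log (Or.inl hpos)).comp (t:ℂ) (hexp.const_sub 1)
      have hlin : HasDerivAt (fun s : ℂ => -(I*s)) (-I) (t:ℂ) := by
        exact (((hasDerivAt_id ((t:ℂ))).const_mul I).neg).congr_deriv (by simp)
      have hsum := (hlin.add hlog).comp_ofReal
      convert hsum using 1
      · rfl
      rw [show (t:ℂ) - z = -(z - (t:ℂ)) by ring, cot_neg', cotA _ hs hne]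
      ring
    have heq := intervalIntegral.integral_eq_sub_of_hasDerivAt
      (f := F) (fun x _ => hderiv x) hint
    rw [heq]
    have hqeq : Complex.exp (-(2*I*(z - ((Real.pi:ℝ):ℂ))))
        = Complex.exp (-(2*I*(z - ((0:ℝ):ℂ)))) := by
      rw [show -(2*I*(z - ((Real.pi:ℝ):ℂ)))
          = -(2*I*(z - ((0:ℝ):ℂ))) + (2*(Real.pi:ℂ)*I) by push_cast; ring,
        Complex.exp_add, Complex.exp_two_pi_mul_I]
      simp
    simp only [hF, hqeq, Complex.ofReal_zero]
    ring
end

section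
/- For every positive integer n and every complex number z with sin(n·z) ≠ 0, cot(n·z) = (1/n)·Σ_{k=0}^{n−1} cot(z + k·π/n). -/
open Complex Finset

/-- `exp(2πI/n)^m ≠ 1` for `0 < m < n`. -/
lemma aux_root_ne_one (n : ℕ) (hn : 0 < n) (m : ℕ) (hm0 : 0 < m) (hmn : m < n) :
    Complex.exp (2 * Real.pi * Complex.I / n) ^ m ≠ 1 := by
  intro h
  rw [← Complex.exp_nat_mul, Complex.exp_eq_one_iff] at h
  obtain ⟨j, hj⟩ := h
  have hn' : (n : ℂ) ≠ 0 := Nat.cast_ne_zero.mpr hn.ne'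
  have hπ : (Real.pi : ℂ) ≠ 0 := Complex.ofReal_ne_zero.mpr Real.pi_ne_zero
  have h2 : (m : ℂ) = (j : ℂ) * n := by
    have hne : (2 : ℂ) * Real.pi * Complex.I ≠ 0 := by
      simp [Complex.I_ne_zero, hπ]
    field_simp at hj
    apply mul_right_cancel₀ hne
    linear_combination (2 * (Real.pi : ℂ) * Complex.I) * hj
  have h3 : (m : ℤ) = j * n := by exact_mod_cast h2
  rcases lt_trichotomy j 0 with h | h | h
  · have : (j : ℤ) * n < 0 := mul_neg_of_neg_of_pos h (by exact_mod_cast hn)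
    omega
  · simp [h] at h3; omega
  · have : (n : ℤ) ≤ j * n := le_mul_of_one_le_left (by exact_mod_cast hn.le) h
    omega

/-- key partial fraction sum. -/
lemma aux_sum (n : ℕ) (hn : 0 < n) (q : ℂ) (hq : q ^ n ≠ 1) :
    ∑ k ∈ Finset.range n, 1 / (1 - q * Complex.exp (2 * Real.pi * Complex.I / n) ^ k)
      = n / (1 - q ^ n) := by
  set ω : ℂ := Complex.exp (2 * Real.pi * Complex.I / n) with hω
  have hn' : (n : ℂ) ≠ 0 := Nat.cast_ne_zero.mpr hn.ne'
  have hωn : ω ^ n = 1 := by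
    rw [hω, ← Complex.exp_nat_mul]
    rw [mul_div_cancel₀ _ hn']
    simpa [mul_comm] using Complex.exp_two_pi_mul_I
  have hqk : ∀ k, q * ω ^ k ≠ 1 := by
    intro k h
    apply hq
    have : (q * ω ^ k) ^ n = 1 := by rw [h]; simp
    rwa [mul_pow, ← pow_mul, mul_comm k n, pow_mul, hωn, one_pow, mul_one] at this
  have hq1 : (1 : ℂ) - q ^ n ≠ 0 := sub_ne_zero.mpr (Ne.symm hq)
  have key : ∑ k ∈ Finset.range n, ∑ m ∈ Finset.range n, (q * ω ^ k) ^ m = n := by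
    rw [Finset.sum_comm]
    have : ∀ m ∈ Finset.range n, ∑ k ∈ Finset.range n, (q * ω ^ k) ^ m
        = if m = 0 then (n : ℂ) else 0 := by
      intro m hm
      rcases Nat.eq_zero_or_pos m with h0 | h0
      · simp [h0]
      · rw [if_neg h0.ne']
        have : ∀ k ∈ Finset.range n, (q * ω ^ k) ^ m = q ^ m * (ω ^ m) ^ k := by
          intro k _; rw [mul_pow, ← pow_mul, mul_comm k m, pow_mul]
        rw [Finset.sum_congr rfl this, ← Finset.mul_sum]
        have hωm : ω ^ m ≠ 1 := aux_root_ne_one n hn m h0 (Finset.mem_range.mp hm)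
        rw [geom_sum_eq hωm]
        rw [← pow_mul, mul_comm m n, pow_mul, hωn, one_pow]
        simp
    rw [Finset.sum_congr rfl this]
    simp [hn.ne']
  have hterm : ∀ k ∈ Finset.range n,
      (1 : ℂ) / (1 - q * ω ^ k) = (∑ m ∈ Finset.range n, (q * ω ^ k) ^ m) / (1 - q ^ n) := by
    intro k _
    rw [geom_sum_eq (hqk k)]
    have hx : (q * ω ^ k) ^ n = q ^ n := by
      rw [mul_pow, ← pow_mul, mul_comm k n, pow_mul, hωn, one_pow, mul_one]
    rw [hx]
    have h1 : (1 : ℂ) - q * ω ^ k ≠ 0 := sub_ne_zero.mpr (Ne.symm (hqk k))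
    have h2 : q * ω ^ k - 1 ≠ 0 := sub_ne_zero.mpr (hqk k)
    field_simp
    ring
  rw [Finset.sum_congr rfl hterm, ← Finset.sum_div, key]

/-- The trigonometric multiplication relation used by Hermite (letter of March 1890):
`cot(nz) = (1/n) ∑_{k=0}^{n-1} cot(z + kπ/n)`. -/
theorem cot_nmul_eq_sum (n : ℕ) (hn : 0 < n) (z : ℂ)
    (hz : Complex.sin (n * z) ≠ 0) :
    Complex.cot (n * z) =
      (1 / n) * ∑ k ∈ Finset.range n, Complex.cot (z + k * Real.pi / n) := by
  set ω : ℂ := Complex.exp (2 * Real.pi * Complex.I / n) with hω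
  set q : ℂ := Complex.exp (2 * Complex.I * z) with hqdef
  have hn' : (n : ℂ) ≠ 0 := Nat.cast_ne_zero.mpr hn.ne'
  have hπ : (Real.pi : ℂ) ≠ 0 := Complex.ofReal_ne_zero.mpr Real.pi_ne_zero
  -- q^n = exp(2I(nz))
  have hqn : q ^ n = Complex.exp (2 * Complex.I * (n * z)) := by
    rw [hqdef, ← Complex.exp_nat_mul]; ring_nf
  have hq : q ^ n ≠ 1 := by
    rw [hqn]
    intro h
    rw [Complex.exp_eq_one_iff] at h
    obtain ⟨j, hj⟩ := h
    apply hz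
    rw [Complex.sin_eq_zero_iff]
    refine ⟨j, ?_⟩
    have hI : Complex.I ≠ 0 := Complex.I_ne_zero
    apply mul_left_cancel₀ (show (2 : ℂ) * Complex.I ≠ 0 by simp [hI])
    linear_combination hj
  have hq1 : (1 : ℂ) - q ^ n ≠ 0 := sub_ne_zero.mpr (Ne.symm hq)
  have hωn : ω ^ n = 1 := by
    rw [hω, ← Complex.exp_nat_mul, mul_div_cancel₀ _ hn']
    simpa [mul_comm] using Complex.exp_two_pi_mul_I
  have hqk : ∀ k : ℕ, q * ω ^ k ≠ 1 := by
    intro k h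
    apply hq
    have : (q * ω ^ k) ^ n = 1 := by rw [h]; simp
    rwa [mul_pow, ← pow_mul, mul_comm k n, pow_mul, hωn, one_pow, mul_one] at this
  have hek : ∀ k : ℕ, Complex.exp (2 * Complex.I * (z + k * Real.pi / n)) = q * ω ^ k := by
    intro k
    rw [mul_add, Complex.exp_add, hqdef, hω, ← Complex.exp_nat_mul]
    congr 2
    field_simp
  -- rewrite each cot via exp ratio
  have hcot : ∀ k ∈ Finset.range n,
      Complex.cot (z + k * Real.pi / n)
        = -Complex.I * 2 * (1 / (1 - q * ω ^ k)) + Complex.I := by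
    intro k _
    rw [Complex.cot_eq_exp_ratio, hek k]
    have h1 : (1 : ℂ) - q * ω ^ k ≠ 0 := sub_ne_zero.mpr (Ne.symm (hqk k))
    field_simp [Complex.I_ne_zero]
    ring_nf
    rw [Complex.I_sq]
    ring
  rw [Finset.sum_congr rfl hcot]
  rw [Finset.sum_add_distrib, ← Finset.mul_sum, aux_sum n hn q hq]
  rw [Complex.cot_eq_exp_ratio, ← hqn]
  simp only [Finset.sum_const, Finset.card_range, nsmul_eq_mul]
  field_simp [Complex.I_ne_zero]
  ring_nf
  rw [Complex.I_sq]
  ring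
end

section
/- Let c ∈ ℂ, R > 0, and let f : ℂ → ℂ be complex-differentiable on the closed disc of centre c and radius R. Let a_1, …, a_m be distinct points of the open disc of centre c and radius R, let α_1, …, α_m be positive integers, and set n = α_1 + ⋯ + α_m. Suppose F ∈ ℂ[X] is a polynomial with degree of F strictly less than n such that for every i and every j with 0 ≤ j ≤ α_i − 1, the j-th derivative of (the evaluation of) F at a_i equals the j-th derivative of f at a_i. Then for every x in the open disc of centre c and radius R, F(x) − f(x) = (1/(2πi))·∮_{|z−c|=R} f(z)·∏_{i=1}^m (x − a_i)^{α_i} / ( (x − z)·∏_{i=1}^m (z − a_i)^{α_i} ) dz, where the contour integral is taken over the circle of centre c and radius R traversed counterclockwise. -/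
open Metric Filter Function Complex Set Topology Real

namespace HermiteAux




/-- Value of iterated `dslope` at the base point equals the power series coefficient. -/
lemma iter_dslope_eq_coeff {u : ℂ → ℂ} {p : FormalMultilinearSeries ℂ ℂ ℂ} {b : ℂ}
    (hp : HasFPowerSeriesAt u p b) (j : ℕ) :
    (Function.swap dslope b)^[j] u b = p.coeff j := by
  have h3 := (hp.has_fpower_series_iterate_dslope_fslope j).coeff_zero 1
  have h4 : (FormalMultilinearSeries.fslope^[j] p).coeff 0 = p.coeff j := by
    rw [FormalMultilinearSeries.coeff_iterate_fslope, zero_add]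
  exact h3.symm.trans h4

lemma factorial_mul_coeff {u : ℂ → ℂ} {p : FormalMultilinearSeries ℂ ℂ ℂ} {b : ℂ}
    (hp : HasFPowerSeriesAt u p b) (j : ℕ) :
    (Nat.factorial j : ℂ) * p.coeff j = iteratedDeriv j u b := by
  obtain ⟨r, hr⟩ := hp
  have h1 := hr.factorial_smul (1 : ℂ) j
  rw [iteratedDeriv_eq_iteratedFDeriv]
  rw [← h1]
  simp [FormalMultilinearSeries.apply_eq_pow_smul_coeff, nsmul_eq_mul]

lemma cvan_of_deriv {u v : ℂ → ℂ} {b : ℂ} (hu : AnalyticAt ℂ u b) (hv : AnalyticAt ℂ v b)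
    (n : ℕ) (hd : ∀ j < n, iteratedDeriv j u b = iteratedDeriv j v b) :
    ∀ j < n, (Function.swap dslope b)^[j] (fun z => u z - v z) b = 0 := by
  obtain ⟨p, hp⟩ := hu
  obtain ⟨q, hq⟩ := hv
  intro j hj
  rw [show (fun z => u z - v z) = u - v from rfl, iter_dslope_eq_coeff (hp.sub hq) j]
  have hfac : (Nat.factorial j : ℂ) ≠ 0 := Nat.cast_ne_zero.mpr (Nat.factorial_ne_zero j)
  have hz : (Nat.factorial j : ℂ) * (p - q).coeff j = 0 := by
    have hc : (p - q).coeff j = p.coeff j - q.coeff j := by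
      rfl
    rw [hc, mul_sub, factorial_mul_coeff hp j, factorial_mul_coeff hq j, hd j hj, sub_self]
  exact (mul_eq_zero.mp hz).resolve_left hfac





lemma global_factor {h : ℂ → ℂ} {b : ℂ} (n : ℕ)
    (hvan : ∀ j < n, (Function.swap dslope b)^[j] h b = 0) (z : ℂ) :
    h z = (z - b) ^ n * (Function.swap dslope b)^[n] h z := by
  induction n with
  | zero => simp
  | succ k ih =>
    have h1 := ih (fun j hj => hvan j (Nat.lt_succ_of_lt hj))
    have hb0 : (Function.swap dslope b)^[k] h b = 0 := hvan k (Nat.lt_succ_self k)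
    have h2 := sub_smul_dslope ((Function.swap dslope b)^[k] h) b z
    rw [smul_eq_mul, hb0, sub_zero] at h2
    rw [Function.iterate_succ_apply', h1, ← h2]
    ring

lemma dslope_pow_mul {b : ℂ} {v : ℂ → ℂ} (hv : DifferentiableAt ℂ v b) (k : ℕ) :
    dslope (fun z => (z - b) ^ (k + 1) * v z) b = fun z => (z - b) ^ k * v z := by
  funext z
  rcases eq_or_ne z b with hzb | hz
  · subst hzb
    rw [dslope_same]
    have h1 : HasDerivAt (fun w : ℂ => (w - z) ^ (k + 1))
        ((k + 1 : ℕ) * (z - z) ^ (k + 1 - 1) * 1) z :=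
      ((hasDerivAt_id z).sub_const z).pow (k + 1)
    have h2 := (h1.mul hv.hasDerivAt).deriv
    rw [show (fun w => (w - z) ^ (k + 1) * v w) = (fun w => (w - z) ^ (k + 1)) * v from rfl, h2]
    rcases Nat.eq_zero_or_pos k with rfl | hk
    · simp
    · rw [sub_self]
      rw [zero_pow (by omega : k + 1 - 1 ≠ 0), zero_pow (by omega : k + 1 ≠ 0),
        zero_pow (by omega : k ≠ 0)]
      ring
  · rw [dslope_of_ne _ hz, slope_def_field]
    have hzb : z - b ≠ 0 := sub_ne_zero.mpr hz
    rw [sub_self, zero_pow (by omega : k + 1 ≠ 0), zero_mul, sub_zero, pow_succ]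
    field_simp

lemma iter_dslope_pow {b : ℂ} {v : ℂ → ℂ} (hv : DifferentiableAt ℂ v b) :
    ∀ (j n : ℕ), j ≤ n →
      (Function.swap dslope b)^[j] (fun z => (z - b) ^ n * v z)
        = fun z => (z - b) ^ (n - j) * v z := by
  intro j
  induction j with
  | zero => intro n _; simp
  | succ k ih =>
    intro n hn
    obtain ⟨n', rfl⟩ : ∃ n', n = n' + 1 := ⟨n - 1, by omega⟩
    rw [Function.iterate_succ_apply]
    have : Function.swap dslope b (fun z => (z - b) ^ (n' + 1) * v z)
        = fun z => (z - b) ^ n' * v z := dslope_pow_mul hv n'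
    rw [this, ih n' (by omega)]
    have he : n' + 1 - (k + 1) = n' - k := by omega
    rw [he]

lemma cvan_pow {b : ℂ} {v : ℂ → ℂ} (hv : DifferentiableAt ℂ v b) {j n : ℕ} (hj : j < n) :
    (Function.swap dslope b)^[j] (fun z => (z - b) ^ n * v z) b = 0 := by
  rw [iter_dslope_pow hv j n hj.le]
  simp [zero_pow (by omega : n - j ≠ 0)]

lemma cvan_mul {h u : ℂ → ℂ} {b : ℂ} (hh : AnalyticAt ℂ h b) (hu : DifferentiableAt ℂ u b)
    (n : ℕ) (hvan : ∀ j < n, (Function.swap dslope b)^[j] h b = 0) :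
    ∀ j < n, (Function.swap dslope b)^[j] (fun z => h z * u z) b = 0 := by
  have hD : DifferentiableAt ℂ ((Function.swap dslope b)^[n] h) b := by
    obtain ⟨p, hp⟩ := hh
    exact (hp.has_fpower_series_iterate_dslope_fslope n).analyticAt.differentiableAt
  have hfun : (fun z => h z * u z)
      = fun z => (z - b) ^ n * ((Function.swap dslope b)^[n] h z * u z) := by
    funext z
    rw [global_factor n hvan z]
    ring
  intro j hj
  rw [hfun]
  exact cvan_pow (hD.mul hu) hj

lemma dslope_congr {h₁ h₂ : ℂ → ℂ} {b : ℂ} (he : h₁ =ᶠ[𝓝 b] h₂) :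
    dslope h₁ b =ᶠ[𝓝 b] dslope h₂ b := by
  have hb := he.eq_of_nhds
  have hder := he.deriv_eq
  filter_upwards [he] with z hz
  rcases eq_or_ne z b with rfl | hzb
  · rw [dslope_same, dslope_same, hder]
  · rw [dslope_of_ne _ hzb, dslope_of_ne _ hzb, slope_def_field, slope_def_field, hz, hb]

lemma iter_dslope_congr {h₁ h₂ : ℂ → ℂ} {b : ℂ} (he : h₁ =ᶠ[𝓝 b] h₂) (j : ℕ) :
    (Function.swap dslope b)^[j] h₁ =ᶠ[𝓝 b] (Function.swap dslope b)^[j] h₂ := by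
  induction j with
  | zero => exact he
  | succ k ih =>
    rw [Function.iterate_succ_apply', Function.iterate_succ_apply']
    exact dslope_congr ih

lemma dslope_diff {c : ℂ} {R : ℝ} {u : ℂ → ℂ} {b : ℂ}
    (hu : ∀ w ∈ closedBall c R, DifferentiableAt ℂ u w) (hb : b ∈ ball c R) :
    ∀ w ∈ closedBall c R, DifferentiableAt ℂ (dslope u b) w := by
  have hdo : DifferentiableOn ℂ u (ball c R) :=
    fun w hw => (hu w (ball_subset_closedBall hw)).differentiableWithinAt
  have hball : AnalyticOnNhd ℂ u (ball c R) := hdo.analyticOnNhd isOpen_ball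
  intro w hw
  rcases eq_or_ne w b with rfl | hwb
  · obtain ⟨p, hp⟩ := hball w hb
    exact hp.has_fpower_series_dslope_fslope.analyticAt.differentiableAt
  · have hev : dslope u b =ᶠ[𝓝 w] fun z => (z - b)⁻¹ * (u z - u b) := by
      filter_upwards [eventually_ne_nhds hwb] with z hz
      rw [dslope_of_ne _ hz, slope_def_field, div_eq_inv_mul]
    have hd : DifferentiableAt ℂ (fun z => (z - b)⁻¹ * (u z - u b)) w :=
      ((differentiableAt_id.sub_const b).inv (sub_ne_zero.mpr hwb)).mul
        ((hu w hw).sub_const _)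
    exact hev.differentiableAt_iff.mpr hd

lemma deflate {c : ℂ} {R : ℝ} {h : ℂ → ℂ} {b : ℂ}
    (hh : ∀ w ∈ closedBall c R, DifferentiableAt ℂ h w) (hb : b ∈ ball c R) (n : ℕ)
    (hvan : ∀ j < n, (Function.swap dslope b)^[j] h b = 0) :
    ∃ g : ℂ → ℂ, (∀ w ∈ closedBall c R, DifferentiableAt ℂ g w) ∧
      ∀ z, h z = (z - b) ^ n * g z := by
  refine ⟨(Function.swap dslope b)^[n] h, ?_, global_factor n hvan⟩
  induction n with
  | zero => exact hh
  | succ k ih =>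
    have : (Function.swap dslope b)^[k + 1] h = dslope ((Function.swap dslope b)^[k] h) b := by
      rw [Function.iterate_succ_apply']
    rw [this]
    exact dslope_diff (ih (fun j hj => hvan j (Nat.lt_succ_of_lt hj))) hb


lemma fact {c : ℂ} {R : ℝ} :
    ∀ (m : ℕ) (a : Fin m → ℂ) (α : Fin m → ℕ), Function.Injective a →
    (∀ i, a i ∈ ball c R) → ∀ h : ℂ → ℂ, (∀ w ∈ closedBall c R, DifferentiableAt ℂ h w) →
    (∀ i, ∀ j < α i, (Function.swap dslope (a i))^[j] h (a i) = 0) →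
    ∃ g, (∀ w ∈ closedBall c R, DifferentiableAt ℂ g w) ∧
      ∀ z, h z = (∏ i, (z - a i) ^ α i) * g z := by
  intro m
  induction m with
  | zero =>
    intro a α _ _ h hh _
    exact ⟨h, hh, fun z => by simp⟩
  | succ m ih =>
    intro a α hinj haR h hh hvan
    obtain ⟨g₁, hg₁, hfac⟩ := deflate hh (haR 0) (α 0) (hvan 0)
    have hvan' : ∀ k : Fin m, ∀ j < α k.succ,
        (Function.swap dslope (a k.succ))^[j] g₁ (a k.succ) = 0 := by
      intro k j hj
      have hb0 : a k.succ ≠ a 0 := fun e => (Fin.succ_ne_zero k) (hinj e)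
      have hev : g₁ =ᶠ[𝓝 (a k.succ)] fun z => h z * ((z - a 0) ^ α 0)⁻¹ := by
        filter_upwards [eventually_ne_nhds hb0] with z hz
        have hz0 : (z - a 0) ^ α 0 ≠ 0 := pow_ne_zero _ (sub_ne_zero.mpr hz)
        rw [hfac z]
        field_simp
      rw [(iter_dslope_congr hev j).eq_of_nhds]
      have hA : AnalyticAt ℂ h (a k.succ) := by
        have hdo : DifferentiableOn ℂ h (ball c R) :=
          fun w hw => (hh w (ball_subset_closedBall hw)).differentiableWithinAt
        exact hdo.analyticOnNhd isOpen_ball _ (haR k.succ)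
      have hu_diff : DifferentiableAt ℂ (fun z => ((z - a 0) ^ α 0)⁻¹) (a k.succ) :=
        ((differentiableAt_id.sub_const _).pow _).inv
          (pow_ne_zero _ (sub_ne_zero.mpr hb0))
      exact cvan_mul hA hu_diff (α k.succ) (hvan k.succ) j hj
    obtain ⟨g, hg, hgf⟩ := ih (a ∘ Fin.succ) (α ∘ Fin.succ)
      (hinj.comp (Fin.succ_injective m)) (fun k => haR k.succ) g₁ hg₁ hvan'
    refine ⟨g, hg, fun z => ?_⟩
    rw [Fin.prod_univ_succ, hfac z, hgf z]
    simp only [Function.comp]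
    ring



lemma poly_bound (F : Polynomial ℂ) (c : ℂ) {n : ℕ} (hpos : 0 < n)
    (hdeg : F.degree < n) :
    ∃ C0 : ℝ, 0 ≤ C0 ∧ ∀ z : ℂ, 1 ≤ ‖z - c‖ → ‖F.eval z‖ ≤ C0 * ‖z - c‖ ^ (n - 1) := by
  set P := F.comp (Polynomial.X + Polynomial.C c) with hP
  have hPdeg : P.natDegree < n := by
    rw [hP, Polynomial.natDegree_comp, Polynomial.natDegree_X_add_C, mul_one]
    by_cases hF0 : F = 0
    · simpa [hF0] using hpos
    · exact (Polynomial.natDegree_lt_iff_degree_lt hF0).mpr hdeg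
  refine ⟨∑ k ∈ Finset.range n, ‖P.coeff k‖, Finset.sum_nonneg fun _ _ => norm_nonneg _, ?_⟩
  intro z hz1
  have he : F.eval z = P.eval (z - c) := by
    rw [hP, Polynomial.eval_comp]
    simp
  rw [he, Polynomial.eval_eq_sum_range' hPdeg]
  refine (norm_sum_le _ _).trans ?_
  rw [Finset.sum_mul]
  refine Finset.sum_le_sum fun i hi => ?_
  rw [norm_mul, norm_pow]
  exact mul_le_mul_of_nonneg_left
    (pow_le_pow_right₀ hz1 (by have := Finset.mem_range.mp hi; omega)) (norm_nonneg _)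

lemma integral_zero_of_deg_lt {c x : ℂ} {R : ℝ} (hR : 0 < R) (hx : x ∈ ball c R)
    {m : ℕ} {a : Fin m → ℂ} (haR : ∀ i, a i ∈ ball c R) {α : Fin m → ℕ} {n : ℕ}
    (hn : n = ∑ i, α i) {F : Polynomial ℂ} (hdeg : F.degree < n) :
    (∮ z in C(c, R), F.eval z / ((x - z) * ∏ i, (z - a i) ^ α i)) = 0 := by
  rcases Nat.eq_zero_or_pos n with h0 | hpos
  · have hF : F = 0 := by
      rw [← Polynomial.degree_eq_bot, ← Nat.WithBot.lt_zero_iff]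
      simpa [h0] using hdeg
    simp [hF, circleIntegral]
  set Φ := fun z : ℂ => F.eval z / ((x - z) * ∏ i, (z - a i) ^ α i) with hΦ
  have hdiff : ∀ z : ℂ, R ≤ dist z c → DifferentiableAt ℂ Φ z := by
    intro z hz
    have hxz : x - z ≠ 0 := by
      have h1 : dist x c < R := mem_ball.mp hx
      intro e
      rw [sub_eq_zero] at e
      subst e
      exact absurd hz (not_le.mpr h1)
    have hprod : (∏ i, (z - a i) ^ α i) ≠ 0 := by
      refine Finset.prod_ne_zero_iff.mpr fun i _ => pow_ne_zero _ (sub_ne_zero.mpr ?_)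
      intro e
      have h1 : dist (a i) c < R := mem_ball.mp (haR i)
      rw [e] at hz
      exact absurd hz (not_le.mpr h1)
    refine (F.differentiableAt).div ?_ (mul_ne_zero hxz hprod)
    exact ((differentiableAt_const x).sub differentiableAt_id).mul
      (DifferentiableAt.fun_finsetProd fun i _ => (differentiableAt_id.sub_const _).pow _)
  have key : ∀ s : ℝ, R ≤ s → (∮ z in C(c, s), Φ z) = ∮ z in C(c, R), Φ z := by
    intro s hs
    refine circleIntegral_eq_of_differentiable_on_annulus_off_countable hR hs countable_empty
      ?_ ?_
    · intro z hz
      exact (hdiff z (not_lt.mp fun hlt => hz.2 (mem_ball.mpr hlt))).continuousAt.continuousWithinAt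
    · intro z hz
      exact hdiff z (le_of_lt (not_le.mp fun hle => hz.1.2 (mem_closedBall.mpr hle)))
  obtain ⟨C0, hC0nn, hFeval⟩ := poly_bound F c hpos hdeg
  have hbound : ∀ s : ℝ, 2 * R + 1 ≤ s →
      ‖∮ z in C(c, R), Φ z‖ ≤ 2 * π * (C0 * 2 ^ (n + 1)) / s := by
    intro s hs
    have hs1 : 1 ≤ s := by linarith
    have hs0 : 0 < s := by linarith
    have hsR : R ≤ s := by linarith
    have hRhalf : R ≤ s / 2 := by linarith
    have hM : ∀ z ∈ sphere c s, ‖Φ z‖ ≤ (C0 * s ^ (n - 1)) / ((s / 2) ^ (n + 1)) := by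
      intro z hz
      have hzc : ‖z - c‖ = s := mem_sphere_iff_norm.mp hz
      have h1z : 1 ≤ ‖z - c‖ := by rw [hzc]; linarith
      have hxz : s / 2 ≤ ‖x - z‖ := by
        have h1 : ‖x - c‖ < R := mem_ball_iff_norm.mp hx
        have h2 : ‖z - c‖ - ‖x - c‖ ≤ ‖z - x‖ := by
          have h3 := norm_sub_norm_le (z - c) (x - c)
          simpa [sub_sub_sub_cancel_right] using h3
        rw [norm_sub_rev]
        rw [hzc] at h2
        linarith
      have hia : ∀ i, s / 2 ≤ ‖z - a i‖ := by
        intro i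
        have h1 : ‖a i - c‖ < R := mem_ball_iff_norm.mp (haR i)
        have h2 : ‖z - c‖ - ‖a i - c‖ ≤ ‖z - a i‖ := by
          have h3 := norm_sub_norm_le (z - c) (a i - c)
          simpa [sub_sub_sub_cancel_right] using h3
        rw [hzc] at h2
        linarith
      have hprod : (s / 2) ^ n ≤ ‖∏ i, (z - a i) ^ α i‖ := by
        rw [norm_prod]
        calc (s / 2) ^ n = ∏ i, (s / 2) ^ α i := by
              rw [Finset.prod_pow_eq_pow_sum, hn]
          _ ≤ ∏ i, ‖(z - a i) ^ α i‖ := by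
              refine Finset.prod_le_prod (fun i _ => pow_nonneg (by linarith) _)
                (fun i _ => ?_)
              rw [norm_pow]
              exact pow_le_pow_left₀ (by linarith) (hia i) _
      have hden : (s / 2) ^ (n + 1) ≤ ‖(x - z) * ∏ i, (z - a i) ^ α i‖ := by
        rw [norm_mul, pow_succ']
        exact mul_le_mul hxz hprod (pow_nonneg (by linarith) _) (norm_nonneg _)
      have hnum : ‖F.eval z‖ ≤ C0 * s ^ (n - 1) := by
        have := hFeval z h1z
        rwa [hzc] at this
      have hpos1 : (0:ℝ) < (s / 2) ^ (n + 1) := by positivity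
      have hnn : (0:ℝ) ≤ C0 * s ^ (n - 1) := by positivity
      calc ‖Φ z‖ = ‖F.eval z‖ / ‖(x - z) * ∏ i, (z - a i) ^ α i‖ := by
            rw [hΦ, norm_div]
        _ ≤ (C0 * s ^ (n - 1)) / ((s / 2) ^ (n + 1)) := div_le_div₀ hnn hnum hpos1 hden
    have hInt := circleIntegral.norm_integral_le_of_norm_le_const (le_of_lt hs0) hM
    rw [key s hsR] at hInt
    refine hInt.trans (le_of_eq ?_)
    have hsn : s ^ (n - 1) * s = s ^ n := by
      rw [← pow_succ]
      congr 1
      omega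
    have hsn2 : s ^ n * s = s ^ (n + 1) := by rw [← pow_succ]
    rw [div_pow]
    rw [div_div_eq_mul_div]
    field_simp
    ring_nf
    linear_combination (s * C0) * hsn
  have htend : Tendsto (fun s : ℝ => 2 * π * (C0 * 2 ^ (n + 1)) / s) atTop (𝓝 0) :=
    tendsto_const_nhds.div_atTop tendsto_id
  have hnorm : ‖∮ z in C(c, R), Φ z‖ ≤ 0 :=
    ge_of_tendsto htend (eventually_atTop.mpr ⟨2 * R + 1, hbound⟩)
  exact norm_le_zero_iff.mp hnorm


end HermiteAux

open Complex in
/-- Hermite's interpolation remainder formula (letter of November 19, 1879):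
the contour-integral representation of the error of the Hermite interpolating
polynomial `F` with distinct nodes `a i` of multiplicities `α i`. -/
theorem hermite_interpolation_remainder (c : ℂ) (R : ℝ) (hR : 0 < R)
    (f : ℂ → ℂ) (hf : ∀ w ∈ Metric.closedBall c R, DifferentiableAt ℂ f w)
    (m : ℕ) (a : Fin m → ℂ) (ha : Function.Injective a)
    (haR : ∀ i, a i ∈ Metric.ball c R)
    (α : Fin m → ℕ) (hα : ∀ i, 0 < α i) (n : ℕ) (hn : n = ∑ i, α i)
    (F : Polynomial ℂ) (hdeg : F.degree < n)
    (hinterp : ∀ i, ∀ j < α i,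
      iteratedDeriv j (fun w : ℂ => F.eval w) (a i) = iteratedDeriv j f (a i)) :
    ∀ x ∈ Metric.ball c R,
      F.eval x - f x =
        (1 / (2 * Real.pi * Complex.I)) *
          ∮ z in C(c, R),
            (f z * ∏ i, (x - a i) ^ (α i)) /
              ((x - z) * ∏ i, (z - a i) ^ (α i)) := by
  intro x hx
  have hh : ∀ w ∈ Metric.closedBall c R, DifferentiableAt ℂ (fun z => f z - F.eval z) w :=
    fun w hw => (hf w hw).sub F.differentiableAt
  have hvan : ∀ i, ∀ j < α i,
      (Function.swap dslope (a i))^[j] (fun z => f z - F.eval z) (a i) = 0 := by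
    intro i
    have hdo : DifferentiableOn ℂ f (Metric.ball c R) :=
      fun w hw => (hf w (Metric.ball_subset_closedBall hw)).differentiableWithinAt
    have hfa : AnalyticAt ℂ f (a i) :=
      hdo.analyticOnNhd Metric.isOpen_ball _ (haR i)
    have hFa : AnalyticAt ℂ (fun w : ℂ => F.eval w) (a i) := by
      have hFd : DifferentiableOn ℂ (fun w : ℂ => F.eval w) Set.univ :=
        fun w _ => F.differentiableAt.differentiableWithinAt
      exact hFd.analyticOnNhd isOpen_univ _ (Set.mem_univ _)
    exact HermiteAux.cvan_of_deriv hfa hFa (α i) (fun j hj => (hinterp i j hj).symm)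
  obtain ⟨g, hg, hfg⟩ := HermiteAux.fact m a α ha haR _ hh hvan
  by_cases hxa : ∃ i, x = a i
  · obtain ⟨i, hxi⟩ := hxa
    have hωx : (∏ i, (x - a i) ^ α i) = 0 :=
      Finset.prod_eq_zero (Finset.mem_univ i)
        (by rw [hxi, sub_self, zero_pow (hα i).ne'])
    have hL : F.eval x - f x = 0 := by
      have h1 := hfg x
      rw [hωx, zero_mul] at h1
      linear_combination -h1
    rw [hL]
    have hint : (fun z => (f z * ∏ i, (x - a i) ^ α i) /
        ((x - z) * ∏ i, (z - a i) ^ α i)) = fun _ => (0 : ℂ) := by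
      funext z
      rw [hωx, mul_zero, zero_div]
    rw [hint]
    simp [circleIntegral]
  · push_neg at hxa
    have hωx : (∏ i, (x - a i) ^ α i) ≠ 0 :=
      Finset.prod_ne_zero_iff.mpr fun i _ => pow_ne_zero _ (sub_ne_zero.mpr (hxa i))
    have hg_dc : DiffContOnCl ℂ g (Metric.ball c R) :=
      ⟨fun w hw => (hg w (Metric.ball_subset_closedBall hw)).differentiableWithinAt, by
        rw [closure_ball c hR.ne']
        exact fun w hw => (hg w hw).continuousAt.continuousWithinAt⟩
    have hcauchy := hg_dc.circleIntegral_sub_inv_smul hx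
    have hcauchy' : (∮ z in C(c, R), (z - x)⁻¹ * g z) = 2 * ↑Real.pi * Complex.I * g x := by
      simpa [smul_eq_mul] using hcauchy
    have hsph : ∀ z ∈ Metric.sphere c R,
        x - z ≠ 0 ∧ (∏ i, (z - a i) ^ α i) ≠ 0 := by
      intro z hz
      have hzc : dist z c = R := Metric.mem_sphere.mp hz
      constructor
      · intro e
        rw [sub_eq_zero] at e
        subst e
        exact absurd hzc (ne_of_lt (Metric.mem_ball.mp hx))
      · refine Finset.prod_ne_zero_iff.mpr fun i _ => pow_ne_zero _ (sub_ne_zero.mpr ?_)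
        intro e
        rw [e] at hzc
        exact absurd hzc (ne_of_lt (Metric.mem_ball.mp (haR i)))
    have heq : Set.EqOn
        (fun z => (f z * ∏ i, (x - a i) ^ α i) / ((x - z) * ∏ i, (z - a i) ^ α i))
        (fun z => (∏ i, (x - a i) ^ α i) * (F.eval z / ((x - z) * ∏ i, (z - a i) ^ α i))
          - (∏ i, (x - a i) ^ α i) * ((z - x)⁻¹ * g z)) (Metric.sphere c R) := by
      intro z hz
      obtain ⟨h1, h2⟩ := hsph z hz
      have h4 : z - x ≠ 0 := by
        rw [← neg_sub]
        exact neg_ne_zero.mpr h1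
      have h3 : f z = F.eval z + (∏ i, (z - a i) ^ α i) * g z := by
        linear_combination hfg z
      simp only
      rw [h3]
      field_simp
      ring
    rw [circleIntegral.integral_congr hR.le heq]
    have hI1 : CircleIntegrable (fun z => (∏ i, (x - a i) ^ α i) *
        (F.eval z / ((x - z) * ∏ i, (z - a i) ^ α i))) c R := by
      apply ContinuousOn.circleIntegrable hR.le
      refine continuousOn_const.mul (ContinuousOn.div ?_ ?_ ?_)
      · exact F.continuous.continuousOn
      · exact ((continuous_const.sub continuous_id).mul
          (continuous_finset_prod _ fun i _ =>
            ((continuous_id.sub continuous_const).pow _))).continuousOn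
      · exact fun z hz => mul_ne_zero (hsph z hz).1 (hsph z hz).2
    have hI2 : CircleIntegrable (fun z => (∏ i, (x - a i) ^ α i) *
        ((z - x)⁻¹ * g z)) c R := by
      apply ContinuousOn.circleIntegrable hR.le
      refine continuousOn_const.mul (ContinuousOn.mul ?_ ?_)
      · exact ContinuousOn.inv₀ (continuous_id.sub continuous_const).continuousOn
          fun z hz => by
            rw [← neg_sub]
            exact neg_ne_zero.mpr (hsph z hz).1
      · exact fun z hz =>
          ((hg z (Metric.sphere_subset_closedBall hz)).continuousAt).continuousWithinAt
    rw [circleIntegral.integral_sub hI1 hI2, circleIntegral.integral_const_mul,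
      circleIntegral.integral_const_mul,
      HermiteAux.integral_zero_of_deg_lt hR hx haR hn hdeg, hcauchy']
    have h2pi : (2 * (Real.pi : ℂ) * Complex.I : ℂ) ≠ 0 := by
      simp [Real.pi_ne_zero, Complex.I_ne_zero]
    have hkey : (∏ i, (x - a i) ^ α i) * (2 * ↑Real.pi * Complex.I * g x)
        = 2 * ↑Real.pi * Complex.I * (f x - F.eval x) := by
      linear_combination (2 * (Real.pi : ℂ) * Complex.I) * (hfg x).symm
    rw [mul_zero, zero_sub, hkey]
    field_simp
    ring
end

section
/- (Eisenstein's theorem.) Let f be a formal power series with rational coefficients in one variable x. Suppose f is algebraic over the integer polynomials, i.e., there exists a nonzero polynomial P = Σ_j p_j(X)·Y^j with coefficients p_j ∈ ℤ[X] such that Σ_j p_j(x)·f^j = 0 in the ring of formal power series over ℚ (where each p_j(x) is viewed as a power series via the canonical inclusion ℤ[X] → ℚ[[x]]). Then there exists a nonzero integer A such that for every natural number n, the rational number A^{n+1}·a_n is an integer, where a_n is the coefficient of x^n in f. -/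
open Polynomial PowerSeries Finset

private lemma exists_int_clear {q : ℚ} {A : ℤ} (h : (q.den : ℤ) ∣ A) :
    ∃ z : ℤ, (z : ℚ) = (A : ℚ) * q := by
  obtain ⟨k, hk⟩ := h
  refine ⟨k * q.num, ?_⟩
  have hq : (q.den : ℚ) * q = (q.num : ℚ) := by
    rw [mul_comm, Rat.mul_den_eq_num]
  subst hk
  push_cast
  rw [mul_comm (q.den : ℚ) (k : ℚ), mul_assoc, hq, mul_comm]

private lemma exists_int_sum {α : Type*} {s : Finset α} {F : α → ℚ} {D : ℚ}
    (h : ∀ p ∈ s, ∃ z : ℤ, (z : ℚ) * D = F p) :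
    ∃ z : ℤ, (z : ℚ) * D = ∑ p ∈ s, F p := by
  classical
  induction s using Finset.induction_on with
  | empty => exact ⟨0, by simp⟩
  | @insert a s2 hx ih =>
    obtain ⟨z₁, hz₁⟩ := h _ (Finset.mem_insert_self _ _)
    obtain ⟨z₂, hz₂⟩ := ih (fun p hp => h p (Finset.mem_insert_of_mem hp))
    exact ⟨z₁ + z₂, by push_cast; rw [add_mul, hz₁, hz₂, Finset.sum_insert hx]⟩

private lemma coeff_pow_eq_zero {w : PowerSeries ℚ} {r : ℕ}
    (hw : ∀ i < r, PowerSeries.coeff i w = 0) (k N : ℕ) (hN : N < k * r) :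
    PowerSeries.coeff N (w ^ k) = 0 := by
  have h1 : (PowerSeries.X : ℚ⟦X⟧) ^ r ∣ w := PowerSeries.X_pow_dvd_iff.2 hw
  have h2 : (PowerSeries.X : ℚ⟦X⟧) ^ (k * r) ∣ w ^ k := by
    rw [mul_comm, pow_mul]
    exact pow_dvd_pow_of_dvd h1 k
  exact PowerSeries.X_pow_dvd_iff.1 h2 N hN

private lemma key_pow (A : ℤ) (w : PowerSeries ℚ) (e m : ℕ)
    (hw : ∀ i < 2 * e + 1, PowerSeries.coeff i w = 0)
    (hIH : ∀ i < m, ∃ z : ℤ,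
      (z : ℚ) * (A : ℚ) ^ (2 * e + 1) = (A : ℚ) ^ (2 * i) * PowerSeries.coeff i w) :
    ∀ k, 1 ≤ k → ∀ N, N < m + (k - 1) * (2 * e + 1) →
      ∃ z : ℤ, (z : ℚ) * (A : ℚ) ^ (k * (2 * e + 1))
        = (A : ℚ) ^ (2 * N) * PowerSeries.coeff N (w ^ k) := by
  intro k
  induction k with
  | zero => omega
  | succ k ih =>
    intro _ N hN
    rcases Nat.eq_zero_or_pos k with rfl | hk
    · simpa using hIH N (by simpa using hN)
    · rw [pow_succ, PowerSeries.coeff_mul, Finset.mul_sum]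
      refine exists_int_sum ?_
      rintro ⟨i, j⟩ hp
      rw [Finset.HasAntidiagonal.mem_antidiagonal] at hp
      simp only []
      by_cases h1 : PowerSeries.coeff i (w ^ k) = 0
      · exact ⟨0, by simp [h1]⟩
      by_cases h2 : PowerSeries.coeff j w = 0
      · exact ⟨0, by simp [h2]⟩
      have hi1 : k * (2 * e + 1) ≤ i := by
        by_contra hcon
        exact h1 (coeff_pow_eq_zero hw k i (by omega))
      have hj1 : 2 * e + 1 ≤ j := by
        by_contra hcon
        exact h2 (hw j (by omega))
      -- bounds
      have hkk : (k - 1) * (2 * e + 1) + (2 * e + 1) = k * (2 * e + 1) := by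
        have : k - 1 + 1 = k := by omega
        calc (k - 1) * (2 * e + 1) + (2 * e + 1) = (k - 1 + 1) * (2 * e + 1) := by ring
        _ = k * (2 * e + 1) := by rw [this]
      have hNk : N < m + k * (2 * e + 1) := by
        have : (k + 1 - 1) = k := by omega
        rwa [this] at hN
      have hi : i < m + (k - 1) * (2 * e + 1) := by omega
      have hj : j < m := by omega
      obtain ⟨z₁, hz₁⟩ := ih (by omega) i hi
      obtain ⟨z₂, hz₂⟩ := hIH j hj
      refine ⟨z₁ * z₂, ?_⟩
      have hexp : (k + 1) * (2 * e + 1) = k * (2 * e + 1) + (2 * e + 1) := by ring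
      have hexp2 : 2 * N = 2 * i + 2 * j := by omega
      calc ((z₁ * z₂ : ℤ) : ℚ) * (A : ℚ) ^ ((k + 1) * (2 * e + 1))
          = ((z₁ : ℚ) * (A : ℚ) ^ (k * (2 * e + 1))) *
            ((z₂ : ℚ) * (A : ℚ) ^ (2 * e + 1)) := by
            push_cast [hexp, pow_add]; ring
        _ = ((A : ℚ) ^ (2 * i) * PowerSeries.coeff i (w ^ k)) *
            ((A : ℚ) ^ (2 * j) * PowerSeries.coeff j w) := by rw [hz₁, hz₂]
        _ = (A : ℚ) ^ (2 * N) *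
            ((PowerSeries.coeff i) (w ^ k) * (PowerSeries.coeff j) w) := by
            rw [hexp2, pow_add]; ring

private lemma eisenstein_aux (f : PowerSeries ℚ) (Q : Polynomial (Polynomial ℚ)) (hQ0 : Q ≠ 0)
    (hroot : Polynomial.eval₂ Polynomial.coeToPowerSeries.ringHom f Q = 0)
    (hmin : ∀ R : Polynomial (Polynomial ℚ), R ≠ 0 →
      Polynomial.eval₂ Polynomial.coeToPowerSeries.ringHom f R = 0 → Q.natDegree ≤ R.natDegree) :
    ∃ A : ℤ, A ≠ 0 ∧ ∀ n : ℕ, ∃ z : ℤ,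
      (z : ℚ) = (A : ℚ) ^ (n + 1) * PowerSeries.coeff n f := by
  classical
  set φ : Polynomial ℚ →+* PowerSeries ℚ := Polynomial.coeToPowerSeries.ringHom with hφ
  have hφc : ∀ (p : Polynomial ℚ) (n : ℕ), PowerSeries.coeff n (φ p) = p.coeff n := by
    intro p n
    simp [hφ, Polynomial.coeToPowerSeries.ringHom_apply, Polynomial.coeff_coe]
  have hφinj : Function.Injective φ := by
    intro a b h
    ext n
    rw [← hφc a n, ← hφc b n, h]
  have hd1 : 1 ≤ Q.natDegree := by
    by_contra hcon
    have h0 : Q.natDegree = 0 := by omega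
    obtain ⟨a, ha⟩ := Polynomial.natDegree_eq_zero.mp h0
    rw [← ha, Polynomial.eval₂_C] at hroot
    have ha0 : a = 0 := hφinj (by simpa using hroot)
    rw [← ha, ha0, map_zero] at hQ0
    exact hQ0 rfl
  set d := Q.natDegree with hdd
  set Q' := Polynomial.derivative Q with hQ'def
  have hQ'ne : Q' ≠ 0 := by
    intro hcon
    have := Polynomial.natDegree_eq_zero_of_derivative_eq_zero hcon
    omega
  have hQ'deg : Q'.natDegree < d := Polynomial.natDegree_derivative_lt (by omega)
  set h1 := Polynomial.eval₂ φ f Q' with hh1def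
  have hh1 : h1 ≠ 0 := by
    intro hcon
    have := hmin Q' hQ'ne hcon
    omega
  have hex : ∃ n, PowerSeries.coeff n h1 ≠ 0 := by
    by_contra hcon
    push_neg at hcon
    exact hh1 (PowerSeries.ext fun n => by simpa using hcon n)
  set e := Nat.find hex with hedef
  set c := PowerSeries.coeff e h1 with hcdef
  have hc : c ≠ 0 := Nat.find_spec hex
  have hlow : ∀ j < e, PowerSeries.coeff j h1 = 0 := fun j hj => not_not.mp (Nat.find_min hex hj)
  -- truncation and tail
  set g : Polynomial ℚ := PowerSeries.trunc (2*e+1) f with hgdef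
  set w := f - φ g with hwdef
  have hwf : f = w + φ g := by rw [hwdef]; ring
  have hwlow : ∀ i < 2*e+1, PowerSeries.coeff i w = 0 := by
    intro i hi
    rw [hwdef, map_sub, hφc, hgdef, PowerSeries.coeff_trunc]
    simp [hi]
  have hwhigh : ∀ i, 2*e+1 ≤ i → PowerSeries.coeff i w = PowerSeries.coeff i f := by
    intro i hi
    rw [hwdef, map_sub, hφc, hgdef, PowerSeries.coeff_trunc]
    simp [Nat.not_lt.mpr hi]
  -- Taylor expansion
  set T := Polynomial.taylor g Q with hTdef
  have hTroot : Polynomial.eval₂ φ w T = 0 := by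
    rw [hTdef, Polynomial.taylor_apply, Polynomial.eval₂_comp]
    have h2 : Polynomial.eval₂ φ w (Polynomial.X + Polynomial.C g) = w + φ g := by simp
    rw [h2, ← hwf]
    exact hroot
  have hTdeg : T.natDegree = d := by rw [hTdef]; exact Polynomial.natDegree_taylor Q g
  have hsum : ∑ k ∈ Finset.range (d+1), φ (T.coeff k) * w ^ k = 0 := by
    rw [← Polynomial.eval₂_eq_sum_range' φ (by omega : T.natDegree < d + 1) w]
    exact hTroot
  -- facts about T.coeff 1
  have ht₁ : T.coeff 1 = Q'.eval g := by rw [hTdef, Polynomial.taylor_coeff_one]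
  have hdvd : w ∣ h1 - φ (T.coeff 1) := by
    rw [ht₁, hh1def]
    have h3 : φ (Q'.eval g) = Polynomial.eval₂ φ (φ g) Q' := by
      show φ (Polynomial.eval₂ (RingHom.id _) g Q') = _
      rw [Polynomial.hom_eval₂, RingHom.comp_id]
    rw [h3, Polynomial.eval₂_eq_eval_map, Polynomial.eval₂_eq_eval_map]
    have := Polynomial.sub_dvd_eval_sub f (φ g) (Q'.map φ)
    rwa [← hwdef] at this
  have ht₁coeff : ∀ j ≤ 2*e, (T.coeff 1).coeff j = PowerSeries.coeff j h1 := by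
    intro j hj
    have hX : (PowerSeries.X : ℚ⟦X⟧)^(2*e+1) ∣ h1 - φ (T.coeff 1) :=
      dvd_trans (PowerSeries.X_pow_dvd_iff.mpr hwlow) hdvd
    have h4 := PowerSeries.X_pow_dvd_iff.mp hX j (by omega)
    rw [map_sub, sub_eq_zero] at h4
    rw [← hφc]
    exact h4.symm
  have ht₁e : (T.coeff 1).coeff e = c := by rw [ht₁coeff e (by omega), hcdef]
  have ht₁low : ∀ j < e, (T.coeff 1).coeff j = 0 := by
    intro j hj
    rw [ht₁coeff j (by omega)]
    exact hlow j hj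
  -- degree bound and A
  set D := (Finset.range (d+1)).sup (fun k => (T.coeff k).natDegree) with hDdef
  have hDk : ∀ k ≤ d, (T.coeff k).natDegree ≤ D := by
    intro k hk
    exact Finset.le_sup (f := fun k => (T.coeff k).natDegree) (Finset.mem_range.mpr (by omega))
  set M := D + 2*e + 2 with hMdef
  set A : ℤ := (∏ i ∈ Finset.range M, ((PowerSeries.coeff i f).den : ℤ)) *
      ∏ p ∈ Finset.range (d+1) ×ˢ Finset.range (D+1),
        (((T.coeff p.1).coeff p.2 / c).den : ℤ) with hAdef
  have hApos : 0 < A := by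
    apply mul_pos
    · apply Finset.prod_pos; intro i _; exact_mod_cast (PowerSeries.coeff i f).pos
    · apply Finset.prod_pos; intro p _; exact_mod_cast ((T.coeff p.1).coeff p.2 / c).pos
  have hA0 : A ≠ 0 := ne_of_gt hApos
  have hAQ : (A : ℚ) ≠ 0 := by exact_mod_cast hA0
  have hA1 : ∀ i < M, ∃ z : ℤ, (z : ℚ) = (A : ℚ) * PowerSeries.coeff i f := by
    intro i hi
    apply exists_int_clear
    rw [hAdef]
    exact dvd_mul_of_dvd_left
      (Finset.dvd_prod_of_mem _ (Finset.mem_range.mpr hi)) _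
  have hA2 : ∀ k ≤ d, ∀ j : ℕ, ∃ z : ℤ, (z : ℚ) * c = (A : ℚ) * (T.coeff k).coeff j := by
    intro k hk j
    by_cases hj : j ≤ D
    · have hdvd2 : (((T.coeff k).coeff j / c).den : ℤ) ∣ A := by
        rw [hAdef]
        refine dvd_mul_of_dvd_right (Finset.dvd_prod_of_mem
          (f := fun p : ℕ × ℕ => (((T.coeff p.1).coeff p.2 / c).den : ℤ)) (a := (k, j)) ?_) _
        rw [Finset.mem_product, Finset.mem_range, Finset.mem_range]
        constructor <;> omega
      obtain ⟨z, hz⟩ := exists_int_clear hdvd2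
      refine ⟨z, ?_⟩
      rw [hz]
      field_simp
    · have hz0 : (T.coeff k).coeff j = 0 :=
        Polynomial.coeff_eq_zero_of_natDegree_lt (lt_of_le_of_lt (hDk k hk) (by omega))
      exact ⟨0, by simp [hz0]⟩
  clear hAdef
  clear_value A
  -- main strong induction
  have hJ : ∀ m : ℕ, ∃ z : ℤ,
      (z:ℚ) * (A:ℚ)^(2*e+1) = (A:ℚ)^(2*m) * PowerSeries.coeff m w := by
    intro m
    induction m using Nat.strong_induction_on with
    | _ m IH =>
    by_cases hm1 : m < 2*e+1
    · exact ⟨0, by simp [hwlow m hm1]⟩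
    push_neg at hm1
    by_cases hm2 : m < M
    · obtain ⟨z₀, hz₀⟩ := hA1 m hm2
      refine ⟨z₀ * A^(2*m - (2*e+2)), ?_⟩
      rw [hwhigh m hm1]
      push_cast
      have hpow : (A:ℚ)^(2*m) = (A:ℚ)^(2*m - (2*e+2)) * (A:ℚ)^(2*e+1) * (A:ℚ) := by
        rw [← pow_add, ← pow_succ]
        congr 1
        omega
      rw [hz₀, hpow]
      ring
    · push_neg at hm2
      -- per-term integrality
      have hterm : ∀ k, k ≤ d → ∀ j N : ℕ, j + N = m + e → (k = 1 → ¬(j = e ∧ N = m)) →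
          ∃ y : ℤ, (y:ℚ) * (c * (A:ℚ)^(2*e+1))
            = (A:ℚ)^(2*m) * ((T.coeff k).coeff j * PowerSeries.coeff N (w^k)) := by
        intro k hk j N hp hne
        by_cases htz : (T.coeff k).coeff j = 0
        · exact ⟨0, by simp [htz]⟩
        by_cases hwz : PowerSeries.coeff N (w^k) = 0
        · exact ⟨0, by simp [hwz]⟩
        have hk1 : 1 ≤ k := by
          rcases Nat.eq_zero_or_pos k with rfl | h
          · exfalso
            rw [pow_zero, PowerSeries.coeff_one] at hwz
            by_cases hN0 : N = 0
            · have hjD : D < j := by omega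
              exact htz (Polynomial.coeff_eq_zero_of_natDegree_lt
                (lt_of_le_of_lt (hDk 0 (by omega)) hjD))
            · exact hwz (if_neg hN0)
          · exact h
        have hjD : j ≤ D := le_trans (Polynomial.le_natDegree_of_ne_zero htz) (hDk k hk)
        have hNk : k * (2*e+1) ≤ N := by
          by_contra hcon
          exact hwz (coeff_pow_eq_zero hwlow k N (by omega))
        have hke : k = 1 → e + 1 ≤ j := by
          intro hk1'
          subst hk1'
          have hje : e ≤ j := by
            by_contra hcon
            exact htz (ht₁low j (by omega))
          rcases Nat.eq_or_lt_of_le hje with heq | hlt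
          · exact absurd ⟨heq.symm, by omega⟩ (hne rfl)
          · omega
        have hNm : N < m + (k-1)*(2*e+1) := by
          rcases Nat.lt_or_ge k 2 with hk2 | hk2
          · have hkeq : k = 1 := by omega
            subst hkeq
            have hN : N < m := by have := hke rfl; omega
            simpa using hN
          · have h6 : 2*e+1 ≤ (k-1)*(2*e+1) :=
              Nat.le_mul_of_pos_left _ (by omega)
            have h7 : N < m + (2*e+1) := by omega
            exact lt_of_lt_of_le h7 (Nat.add_le_add_left h6 m)
        obtain ⟨z₂, hz₂⟩ := key_pow A w e m hwlow IH k hk1 N hNm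
        obtain ⟨z₁, hz₁⟩ := hA2 k hk j
        obtain ⟨KK, hKK⟩ : ∃ K, k * (2*e+1) = K := ⟨_, rfl⟩
        rw [hKK] at hNk hz₂
        have hbound : 2*e+2+2*N ≤ 2*m + KK := by
          rcases Nat.lt_or_ge k 2 with hk2 | hk2
          · have hkeq : k = 1 := by omega
            subst hkeq
            have := hke rfl
            omega
          · have h8 : 2*(2*e+1) ≤ KK := by
              rw [← hKK]; exact Nat.mul_le_mul_right _ hk2
            omega
        obtain ⟨β, hβeq⟩ : ∃ β, 2*m + KK = β + (2*e+2+2*N) :=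
          ⟨2*m + KK - (2*e+2+2*N), by omega⟩
        refine ⟨z₁ * z₂ * A^β, ?_⟩
        apply mul_right_cancel₀ (pow_ne_zero (2*N) hAQ)
        have h5 : (A:ℚ) * (A:ℚ)^(β + (2*e+1) + 2*N) = (A:ℚ)^KK * (A:ℚ)^(2*m) := by
          rw [← pow_succ', ← pow_add]
          congr 1
          omega
        calc ((z₁ * z₂ * A^β : ℤ):ℚ) * (c * (A:ℚ)^(2*e+1)) * (A:ℚ)^(2*N)
            = ((z₁:ℚ) * c) * (z₂:ℚ) * ((A:ℚ)^β * (A:ℚ)^(2*e+1) * (A:ℚ)^(2*N)) := by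
              push_cast; ring
          _ = ((A:ℚ) * (T.coeff k).coeff j) * (z₂:ℚ)
              * ((A:ℚ)^β * (A:ℚ)^(2*e+1) * (A:ℚ)^(2*N)) := by rw [hz₁]
          _ = (T.coeff k).coeff j * (z₂:ℚ) * ((A:ℚ) * (A:ℚ)^(β + (2*e+1) + 2*N)) := by
              rw [pow_add, pow_add]; ring
          _ = (T.coeff k).coeff j * ((z₂:ℚ) * (A:ℚ)^KK) * (A:ℚ)^(2*m) := by
              rw [h5]; ring
          _ = (T.coeff k).coeff j
              * ((A:ℚ)^(2*N) * PowerSeries.coeff N (w^k)) * (A:ℚ)^(2*m) := by rw [hz₂]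
          _ = (A:ℚ)^(2*m) * ((T.coeff k).coeff j * PowerSeries.coeff N (w^k))
              * (A:ℚ)^(2*N) := by ring
      -- coefficient extraction at m + e
      have h0 : ∑ k ∈ Finset.range (d+1), ∑ p ∈ Finset.HasAntidiagonal.antidiagonal (m+e),
          (T.coeff k).coeff p.1 * PowerSeries.coeff p.2 (w^k) = 0 := by
        have h9 := congrArg (PowerSeries.coeff (m+e)) hsum
        rw [map_sum, map_zero] at h9
        rw [← h9]
        refine Finset.sum_congr rfl ?_
        intro k _
        rw [PowerSeries.coeff_mul]
        refine Finset.sum_congr rfl ?_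
        intro p _
        rw [hφc]
      have hmem1 : (1:ℕ) ∈ Finset.range (d+1) := Finset.mem_range.mpr (by omega)
      rw [← Finset.add_sum_erase _ _ hmem1] at h0
      have hmem2 : ((e,m) : ℕ×ℕ) ∈ Finset.HasAntidiagonal.antidiagonal (m+e) :=
        Finset.HasAntidiagonal.mem_antidiagonal.mpr (by omega)
      rw [← Finset.add_sum_erase _ _ hmem2] at h0
      simp only [pow_one] at h0
      rw [ht₁e] at h0
      obtain ⟨y₁, hy₁⟩ : ∃ y₁ : ℤ, (y₁:ℚ) * (c * (A:ℚ)^(2*e+1)) =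
          (A:ℚ)^(2*m) * ∑ p ∈ (Finset.HasAntidiagonal.antidiagonal (m+e)).erase (e,m),
            (T.coeff 1).coeff p.1 * PowerSeries.coeff p.2 w := by
        rw [Finset.mul_sum]
        refine exists_int_sum ?_
        rintro ⟨j, N⟩ hp
        rw [Finset.mem_erase, Finset.HasAntidiagonal.mem_antidiagonal] at hp
        have h10 := hterm 1 (by omega) j N hp.2
          (fun _ hb => hp.1 (by rw [Prod.mk.injEq]; exact ⟨hb.1, hb.2⟩))
        simpa [pow_one] using h10
      obtain ⟨y₂, hy₂⟩ : ∃ y₂ : ℤ, (y₂:ℚ) * (c * (A:ℚ)^(2*e+1)) =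
          (A:ℚ)^(2*m) * ∑ k ∈ (Finset.range (d+1)).erase 1,
            ∑ p ∈ Finset.HasAntidiagonal.antidiagonal (m+e),
              (T.coeff k).coeff p.1 * PowerSeries.coeff p.2 (w^k) := by
        rw [Finset.mul_sum]
        refine exists_int_sum ?_
        intro k hk
        rw [Finset.mem_erase, Finset.mem_range] at hk
        rw [Finset.mul_sum]
        refine exists_int_sum ?_
        rintro ⟨j, N⟩ hp
        rw [Finset.HasAntidiagonal.mem_antidiagonal] at hp
        exact hterm k (by omega) j N hp (fun h1' => absurd h1' hk.1)
      refine ⟨-(y₁ + y₂), ?_⟩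
      apply mul_left_cancel₀ hc
      push_cast
      linear_combination (-((A:ℚ)^(2*m))) * h0 - hy₁ - hy₂
  -- conclusion
  refine ⟨A * A, mul_ne_zero hA0 hA0, ?_⟩
  intro n
  by_cases hn : n < 2*e+1
  · obtain ⟨z₀, hz₀⟩ := hA1 n (by omega)
    refine ⟨z₀ * A^(2*n+1), ?_⟩
    push_cast
    have hAA : ((A:ℚ)*(A:ℚ))^(n+1) = (A:ℚ)^(2*n+1) * (A:ℚ) := by
      rw [mul_pow, ← pow_add, show (n+1)+(n+1) = (2*n+1)+1 by ring, pow_succ]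
    rw [hz₀, hAA]
    ring
  · push_neg at hn
    obtain ⟨z, hz⟩ := hJ n
    refine ⟨z * A^(2*e+3), ?_⟩
    push_cast
    rw [← hwhigh n hn]
    have hAA : ((A:ℚ)*(A:ℚ))^(n+1) = (A:ℚ)^(2*n) * (A:ℚ)^2 := by
      rw [mul_pow, ← pow_add, ← pow_add]
      congr 1
      ring
    rw [hAA]
    linear_combination (A:ℚ)^2 * hz

/-- Eisenstein's theorem (the subject of Gomes Teixeira's paper praised in
Hermite's letters of October 20, 1885 and January 26, 1886): if a formal power
series `f` with rational coefficients satisfies a nontrivial polynomial equation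
`∑_j p_j(x) f^j = 0` with `p_j ∈ ℤ[X]`, then there is a nonzero integer `A` such
that `A^(n+1) a_n` is an integer for every `n`, where `a_n` is the `n`-th
coefficient of `f`. -/
theorem eisenstein_theorem (f : PowerSeries ℚ)
    (P : Polynomial (Polynomial ℤ)) (hP : P ≠ 0)
    (hroot : Polynomial.eval₂
      ((Polynomial.coeToPowerSeries.ringHom : Polynomial ℚ →+* PowerSeries ℚ).comp
        (Polynomial.mapRingHom (Int.castRingHom ℚ))) f P = 0) :
    ∃ A : ℤ, A ≠ 0 ∧ ∀ n : ℕ, ∃ z : ℤ,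
      (z : ℚ) = (A : ℚ) ^ (n + 1) * PowerSeries.coeff n f := by
  classical
  have hψinj : Function.Injective (Polynomial.mapRingHom (Int.castRingHom ℚ)) :=
    Polynomial.map_injective _ Int.cast_injective
  set P' : Polynomial (Polynomial ℚ) := P.map (Polynomial.mapRingHom (Int.castRingHom ℚ))
    with hP'def
  have hP'0 : P' ≠ 0 := by
    intro hcon
    apply hP
    apply Polynomial.map_injective _ hψinj
    rw [← hP'def, hcon, Polynomial.map_zero]
  have hroot' : Polynomial.eval₂ Polynomial.coeToPowerSeries.ringHom f P' = 0 := by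
    rw [hP'def, Polynomial.eval₂_map]
    exact hroot
  have hex : ∃ n : ℕ, ∃ R : Polynomial (Polynomial ℚ), R ≠ 0 ∧
      Polynomial.eval₂ Polynomial.coeToPowerSeries.ringHom f R = 0 ∧ R.natDegree = n :=
    ⟨P'.natDegree, P', hP'0, hroot', rfl⟩
  obtain ⟨Q, hQ0, hQroot, hQdeg⟩ := Nat.find_spec hex
  refine eisenstein_aux f Q hQ0 hQroot ?_
  intro R hR0 hRroot
  rw [hQdeg]
  exact Nat.find_le ⟨R, hR0, hRroot, rfl⟩
end
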